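/- arXiv:1203.2429 — 3 statements merged into one kernel-verified Lean document; each statement's English description precedes it below -/
import Mathlib

section
/- Let S be a pseudo-nilpotent finite semigroup, J an ideal of S with J = M^0(G, I, Λ; P) a regular Rees matrix semigroup that is not Mal'cev nilpotent. Then there is a surjective semigroup homomorphism Φ: S → (I × Λ)^0 onto the rectangular band I × Λ with a zero adjoined, such that Φ(a) = θ exactly for a ∈ F'_J, and for each a ∈ F_J ∪ (J \ {θ}), writing Φ(a) = (e, f): a(J \ {θ}) ⊆ G_{e,*}, (J \ {θ})a ⊆ G_{*,f}, the subsemigroup ⟨(g; e, f), a⟩ is Mal'cev nilpotent for all g ∈ G, and there is an edge in N_S between a and every element of J \ (G_{e,f} ∪ {θ}). -/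
/-- One multiplication step `a · w · b` where `w` ranges over `S¹`
(`none` playing the role of the adjoined identity). -/
def mulW {S : Type*} [Semigroup S] (a : S) (w : Option S) (b : S) : S :=
  match w with
  | none => a * b
  | some c => a * c * b

/-- The Mal'cev sequences: `(malcev x y w n).1 = λ_n` and `(malcev x y w n).2 = ρ_n`,
with `λ_0 = x`, `ρ_0 = y`, `λ_{n+1} = λ_n w_{n+1} ρ_n`, `ρ_{n+1} = ρ_n w_{n+1} λ_n`. -/
def malcev {S : Type*} [Semigroup S] (x y : S) (w : ℕ → Option S) : ℕ → S × S
  | 0 => (x, y)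
  | n + 1 =>
      let p := malcev x y w n
      (mulW p.1 (w n) p.2, mulW p.2 (w n) p.1)

/-- Mal'cev nilpotency of a (multiplicatively closed) subset `A` of `S`,
computed with parameters from `A¹`. -/
def SetMN {S : Type*} [Semigroup S] (A : Set S) : Prop :=
  ∃ n : ℕ, 0 < n ∧ ∀ x ∈ A, ∀ y ∈ A, ∀ w : ℕ → Option S,
    (∀ k c, w k = some c → c ∈ A) →
    (malcev x y w n).1 = (malcev x y w n).2

/-- A semigroup is Mal'cev nilpotent. -/
def IsMN (S : Type*) [Semigroup S] : Prop := SetMN (Set.univ : Set S)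

/-- Equality in the Rees quotient by (the possibly empty ideal) `I`. -/
def ReesEq {S : Type*} [Semigroup S] (I : Set S) (a b : S) : Prop :=
  a = b ∨ (a ∈ I ∧ b ∈ I)

/-- Mal'cev nilpotency of the Rees quotient `A / I` (computed by lifting to `A`). -/
def SetMNMod {S : Type*} [Semigroup S] (I A : Set S) : Prop :=
  ∃ n : ℕ, 0 < n ∧ ∀ x ∈ A, ∀ y ∈ A, ∀ w : ℕ → Option S,
    (∀ k c, w k = some c → c ∈ A) →
    ReesEq I (malcev x y w n).1 (malcev x y w n).2

/-- `I` is an ideal of (the mul-closed subset) `T`; the empty set counts as an ideal. -/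
def IsIdealIn {S : Type*} [Semigroup S] (T I : Set S) : Prop :=
  I ⊆ T ∧ ∀ a ∈ I, ∀ t ∈ T, t * a ∈ I ∧ a * t ∈ I

/-- Edge of the upper non-nilpotent graph `N_S`: `⟨a,b⟩` is not Mal'cev nilpotent. -/
def NEdge {S : Type*} [Semigroup S] (a b : S) : Prop :=
  a ≠ b ∧ ¬ SetMN (Subsemigroup.closure ({a, b} : Set S) : Set S)

/-- The generating set of the subsemigroup `⟨x, y, w_1, …, w_m⟩`. -/
def genSet {S : Type*} [Semigroup S] (x y : S) (w : ℕ → Option S) (m : ℕ) : Set S :=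
  {x, y} ∪ {c | ∃ k, k < m ∧ w k = some c}

/-- A pseudo-nilpotent semigroup. -/
def IsPN (S : Type*) [Semigroup S] : Prop :=
  ∀ (x y : S) (w : ℕ → Option S) (m : ℕ) (I : Set S),
    IsIdealIn (Subsemigroup.closure (genSet x y w m) : Set S) I →
    (malcev x y w m).1 ∉ I → (malcev x y w m).2 ∉ I →
    (∃ t, t < m ∧ (malcev x y w t).1 ≠ (malcev x y w t).2 ∧
      malcev x y w t = malcev x y w m) →
    ∀ i ≤ m, ¬ SetMNMod I
      (Subsemigroup.closure ({(malcev x y w i).1, (malcev x y w i).2} : Set S) : Set S)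

/-- Carrier of the Rees matrix semigroup with zero `M⁰(G, I, Λ; P)`:
`none` is the zero `θ`, `some (g, i, λ)` is the element `(g; i, λ)`. -/
def ReesM0 (G I L : Type*) (_P : L → I → Option G) : Type _ := Option (G × I × L)

/-- Multiplication of `M⁰(G, I, Λ; P)`. -/
def rmMul {G I L : Type*} [Group G] (P : L → I → Option G) :
    Option (G × I × L) → Option (G × I × L) → Option (G × I × L)
  | some (g, i, l), some (h, j, m) => (P l j).elim none fun p => some (g * p * h, i, m)
  | _, _ => none

theorem rmMul_assoc {G I L : Type*} [Group G] (P : L → I → Option G) :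
    ∀ a b c : Option (G × I × L), rmMul P (rmMul P a b) c = rmMul P a (rmMul P b c) := by
  rintro (_ | ⟨g, i, l⟩) (_ | ⟨h, j, m⟩) (_ | ⟨k, s, t⟩) <;>
    simp only [rmMul] <;>
    try rfl
  · rcases hp : P l j with _ | p <;> simp [rmMul, hp]
  · rcases hp : P l j with _ | p <;> rcases hq : P m s with _ | q <;>
      simp [rmMul, hp, hq, mul_assoc]

instance ReesM0.semigroup {G I L : Type*} [Group G] {P : L → I → Option G} :
    Semigroup (ReesM0 G I L P) where
  mul := rmMul P
  mul_assoc := rmMul_assoc P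

/-- The nonzero element `(g; i, λ)` of `M⁰(G, I, Λ; P)`. -/
def ReesM0.elem {G I L : Type*} {P : L → I → Option G} (g : G) (i : I) (l : L) :
    ReesM0 G I L P := some (g, i, l)

/-- For a semigroup `S` with zero and an ideal `J` of `S`:
`F_J = {s ∈ S \ J : sj ≠ θ or js ≠ θ for some j ∈ J}`. -/
def Fset {S : Type*} [SemigroupWithZero S] (J : Set S) : Set S :=
  {s | s ∉ J ∧ ∃ j ∈ J, s * j ≠ 0 ∨ j * s ≠ 0}

/-- Multiplication of the rectangular band `(I × Λ)⁰` with zero `none` adjoined: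
`(i, λ)(i', λ') = (i, λ')`. -/
def rbMul {I L : Type*} : Option (I × L) → Option (I × L) → Option (I × L)
  | some (i, _), some (_, l) => some (i, l)
  | _, _ => none

section Batch1

/-! ### Generic Mal'cev sequence lemmas -/

lemma malcev_succ {T : Type*} [Semigroup T] (x y : T) (w : ℕ → Option T) (n : ℕ) :
    malcev x y w (n+1) = (mulW (malcev x y w n).1 (w n) (malcev x y w n).2,
      mulW (malcev x y w n).2 (w n) (malcev x y w n).1) := rfl

lemma malcev_zero {T : Type*} [Semigroup T] (x y : T) (w : ℕ → Option T) :
    malcev x y w 0 = (x, y) := rfl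

lemma malcev_propagate {T : Type*} [Semigroup T] {x y : T} {w : ℕ → Option T} {k : ℕ}
    (h : (malcev x y w k).1 = (malcev x y w k).2) :
    ∀ n, k ≤ n → (malcev x y w n).1 = (malcev x y w n).2 := by
  intro n hn
  induction n with
  | zero => exact (Nat.le_zero.mp hn) ▸ h
  | succ m ih =>
    rcases Nat.lt_or_ge k (m+1) with h1 | h2
    · have hm := ih (Nat.lt_succ_iff.mp h1)
      simp only [malcev_succ]
      rw [hm]
    · exact (Nat.le_antisymm (Nat.le_of_lt_succ (Nat.lt_succ_of_le h2)) hn ▸ h)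

/-- Commutativity propagates to closures. -/
lemma closure_comm {T : Type*} [Semigroup T] {A : Set T}
    (hA : ∀ x ∈ A, ∀ y ∈ A, x * y = y * x) :
    ∀ u ∈ Subsemigroup.closure A, ∀ v ∈ Subsemigroup.closure A, u * v = v * u := by
  intro u hu v hv
  induction hu, hv using Subsemigroup.closure_induction₂ with
  | mem a b ha hb => exact hA a ha b hb
  | mul_left a b c ha hb hc pac pbc =>
      rw [mul_assoc, pbc, ← mul_assoc, pac, mul_assoc]
  | mul_right a b c ha hb hc pca pcb =>
      rw [← mul_assoc, pca, mul_assoc, pcb, ← mul_assoc]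

/-- A commutative closed set is Mal'cev nilpotent mod any ideal. -/
lemma setMNMod_of_comm {T : Type*} [Semigroup T] {x y : T} (Iset : Set T)
    (hcomm : x * y = y * x) :
    SetMNMod Iset (Subsemigroup.closure ({x, y} : Set T) : Set T) := by
  have hgen : ∀ u ∈ ({x, y} : Set T), ∀ v ∈ ({x, y} : Set T), u * v = v * u := by
    rintro u (rfl | rfl) v (rfl | rfl) <;> simp_all
  have hC := closure_comm hgen
  refine ⟨1, Nat.one_pos, ?_⟩
  intro u hu v hv w hw
  left
  show mulW u (w 0) v = mulW v (w 0) u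
  cases hw0 : w 0 with
  | none => exact hC u hu v hv
  | some c =>
    have hc : c ∈ Subsemigroup.closure ({x, y} : Set T) := hw 0 c hw0
    show u * c * v = v * c * u
    rw [hC u hu c hc, mul_assoc, hC u hu v hv, ← mul_assoc, hC c hc v hv]

lemma setMNMod_of_setMN {T : Type*} [Semigroup T] {A : Set T} (Iset : Set T)
    (h : SetMN A) : SetMNMod Iset A := by
  obtain ⟨n, hn, hh⟩ := h
  exact ⟨n, hn, fun u hu v hv w hw => Or.inl (hh u hu v hv w hw)⟩

/-! ### The contradiction engine -/

lemma engine {S : Type*} [SemigroupWithZero S] [Finite S] (hPN : IsPN S)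
    (x y : S) (w : ℕ → Option S)
    (hne : ∀ n, (malcev x y w n).1 ≠ (malcev x y w n).2)
    (hmn : SetMNMod (∅ : Set S) (Subsemigroup.closure ({x, y} : Set S) : Set S)) :
    False := by
  obtain ⟨a, b, hab, heq⟩ :=
    Finite.exists_ne_map_eq_of_infinite (fun n : ℕ => malcev x y w n)
  have key : ∀ t m : ℕ, t < m → malcev x y w t = malcev x y w m → False := by
    intro t m htm heq
    have := hPN x y w m ∅ ⟨Set.empty_subset _, by simp⟩ (Set.notMem_empty _)
      (Set.notMem_empty _) ⟨t, htm, hne t, heq⟩ 0 (Nat.zero_le m)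
    apply this
    have h0 : malcev x y w 0 = (x, y) := rfl
    rw [h0]
    exact hmn
  rcases lt_or_gt_of_ne hab with h | h
  · exact key a b h heq
  · exact key b a h heq.symm

/-! ### Group-theoretic lemmas -/

lemma gmalcev_mem_lcs {Γ : Type*} [Group Γ] (x y : Γ) (w : ℕ → Option Γ) :
    ∀ n, (malcev x y w n).1 * ((malcev x y w n).2)⁻¹ ∈ (⊤ : Subgroup Γ).lowerCentralSeries n := by
  intro n
  induction n with
  | zero => exact Subgroup.mem_top _
  | succ m ih =>
    obtain ⟨⟨l, r⟩, hp⟩ : ∃ p : Γ × Γ, malcev x y w m = p := ⟨_, rfl⟩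
    have ih' : l * r⁻¹ ∈ (⊤ : Subgroup Γ).lowerCentralSeries m := by rw [hp] at ih; exact ih
    have mem : ∀ u : Γ, (l * r⁻¹) * u * (l * r⁻¹)⁻¹ * u⁻¹ ∈ (⊤ : Subgroup Γ).lowerCentralSeries (m+1) := by
      intro u
      rw [Subgroup.mem_lowerCentralSeries_succ_iff]
      exact Subgroup.subset_closure ⟨l * r⁻¹, ih', u, Subgroup.mem_top u, rfl⟩
    rw [malcev_succ, hp]
    cases w m with
    | none =>
      show (l * r) * (r * l)⁻¹ ∈ _
      have e : (l * r) * (r * l)⁻¹ = (l * r⁻¹) * r * (l * r⁻¹)⁻¹ * r⁻¹ := by group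
      rw [e]; exact mem r
    | some c =>
      show (l * c * r) * (r * c * l)⁻¹ ∈ _
      have e : (l * c * r) * (r * c * l)⁻¹ = (l * r⁻¹) * (r * c) * (l * r⁻¹)⁻¹ * (r * c)⁻¹ := by
        group
      rw [e]; exact mem (r * c)

/-- A nilpotent group satisfies a uniform Mal'cev collapse. -/
lemma gmalcev_bound {Γ : Type*} [Group Γ] (h : Group.IsNilpotent Γ) :
    ∃ n : ℕ, 0 < n ∧ ∀ (x y : Γ) (w : ℕ → Option Γ),
      (malcev x y w n).1 = (malcev x y w n).2 := by
  obtain ⟨n, hn⟩ := nilpotent_iff_lowerCentralSeries.mp h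
  refine ⟨n + 1, Nat.succ_pos n, fun x y w => ?_⟩
  have h1 := gmalcev_mem_lcs x y w n
  have h2 : (⊤ : Subgroup Γ).lowerCentralSeries n ≤ (⊤ : Subgroup Γ).lowerCentralSeries n := le_refl _
  have hbot : (malcev x y w n).1 * ((malcev x y w n).2)⁻¹ = 1 := by
    rw [hn] at h1; exact Subgroup.mem_bot.mp h1
  have heq : (malcev x y w n).1 = (malcev x y w n).2 := by
    have := mul_inv_eq_one.mp hbot
    exact this
  exact malcev_propagate heq (n+1) (Nat.le_succ n)

/-- Stabilized upper central series of a non-nilpotent finite group. -/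
lemma ucs_stab {Γ : Type*} [Group Γ] [Finite Γ] (hnot : ¬ Group.IsNilpotent Γ) :
    ∃ K : Subgroup Γ, (1 : Γ) ∈ K ∧ (∃ d : Γ, d ∉ K) ∧
      ∀ x : Γ, x ∉ K → ∃ u : Γ, x * u * x⁻¹ * u⁻¹ ∉ K := by
  have hfin : Finite (Subgroup Γ) :=
    Finite.of_injective (fun H : Subgroup Γ => (H : Set Γ)) (SetLike.coe_injective)
  obtain ⟨a, b, hab, heq⟩ :=
    Finite.exists_ne_map_eq_of_infinite (fun n : ℕ => upperCentralSeries Γ n)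
  have key : ∀ s t : ℕ, s < t → upperCentralSeries Γ s = upperCentralSeries Γ t →
      upperCentralSeries Γ s = upperCentralSeries Γ (s+1) := by
    intro s t hst he
    refine le_antisymm (upperCentralSeries_mono Γ (Nat.le_succ s)) ?_
    rw [he]
    exact upperCentralSeries_mono Γ hst
  have hstab : ∃ N, upperCentralSeries Γ N = upperCentralSeries Γ (N+1) := by
    rcases lt_or_gt_of_ne hab with h | h
    · exact ⟨a, key a b h heq⟩
    · exact ⟨b, key b a h heq.symm⟩
  obtain ⟨N, hN⟩ := hstab
  refine ⟨upperCentralSeries Γ N, Subgroup.one_mem _, ?_, ?_⟩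
  · by_contra hcon
    push_neg at hcon
    exact hnot ⟨N, (Subgroup.eq_top_iff' _).mpr hcon⟩
  · intro x hx
    by_contra hcon
    push_neg at hcon
    exact hx (hN ▸ mem_upperCentralSeries_succ_iff.mpr hcon)

end Batch1
section Batch2

/-- Bundled context for the Rees-matrix ideal situation. -/
structure RC {S : Type*} [SemigroupWithZero S] {G I L : Type*} [Group G]
    (P : L → I → Option G) (J : Set S) (φ : S → ReesM0 G I L P) : Prop where
  hJ : IsIdealIn Set.univ J
  h0 : (0 : S) ∈ J
  hP : ∀ l i, P l i ≠ none
  hom : ∀ a ∈ J, ∀ b ∈ J, φ (a * b) = φ a * φ b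
  hinj : ∀ a ∈ J, ∀ b ∈ J, φ a = φ b → a = b
  hsurj : ∀ z : ReesM0 G I L P, ∃ a ∈ J, φ a = z
  hz : φ 0 = (none : Option (G × I × L))

namespace RC

variable {S : Type*} [SemigroupWithZero S] {G I L : Type*} [Group G]
  {P : L → I → Option G} {J : Set S} {φ : S → ReesM0 G I L P}
  (hc : RC P J φ)
include hc
set_option linter.unusedSectionVars false

lemma mulJl {a : S} (ha : a ∈ J) (t : S) : t * a ∈ J := (hc.hJ.2 a ha t trivial).1
lemma mulJr {a : S} (ha : a ∈ J) (t : S) : a * t ∈ J := (hc.hJ.2 a ha t trivial).2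

/-- sandwich entry as a group element -/
noncomputable def pv (l : L) (i : I) : G :=
  (P l i).get (by rw [Option.isSome_iff_ne_none]; exact hc.hP l i)

lemma pv_spec (l : L) (i : I) : P l i = some (hc.pv l i) := (Option.some_get _).symm

lemma phi_ne_none {a : S} (ha : a ∈ J) (h0 : a ≠ 0) : φ a ≠ none := by
  intro h
  exact h0 (hc.hinj a ha 0 hc.h0 (h.trans hc.hz.symm))

lemma eq_zero_of_phi_none {a : S} (ha : a ∈ J) (h : φ a = none) : a = 0 :=
  by_contra fun h0 => hc.phi_ne_none ha h0 h

lemma dat {a : S} (ha : a ∈ J) (h0 : a ≠ 0) : ∃ g i l, φ a = some (g, i, l) := by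
  rcases hfa : φ a with _ | ⟨g, i, l⟩
  · exact absurd hfa (hc.phi_ne_none ha h0)
  · exact ⟨g, i, l, rfl⟩

lemma ne_zero_of_phi {a : S} (ha : a ∈ J) {g i l} (h : φ a = some (g, i, l)) : a ≠ 0 := by
  intro h0
  rw [h0, hc.hz] at h
  exact Option.some_ne_none _ h.symm

/-- T1 : the product formula inside `J`. -/
lemma mulφ {a b : S} (ha : a ∈ J) (hb : b ∈ J) {ga gb i i' l l'}
    (hfa : φ a = some (ga, i, l)) (hfb : φ b = some (gb, i', l')) :
    φ (a * b) = some (ga * hc.pv l i' * gb, i, l') := by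
  have : φ (a * b) = rmMul P (φ a) (φ b) := hc.hom a ha b hb
  rw [this, hfa, hfb]
  show (P l i').elim none _ = _
  rw [hc.pv_spec l i']
  rfl

lemma mul_ne_zero' {a b : S} (ha : a ∈ J) (hb : b ∈ J) (ha0 : a ≠ 0) (hb0 : b ≠ 0) :
    a * b ≠ 0 := by
  obtain ⟨ga, i, l, hfa⟩ := hc.dat ha ha0
  obtain ⟨gb, i', l', hfb⟩ := hc.dat hb hb0
  exact hc.ne_zero_of_phi (hc.mulJr ha b) (hc.mulφ ha hb hfa hfb)

/-- a nonzero element of `J` with prescribed coordinates -/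
noncomputable def jelt (g : G) (i : I) (l : L) : S := (hc.hsurj (some (g, i, l))).choose

lemma jelt_mem (g : G) (i : I) (l : L) : hc.jelt g i l ∈ J :=
  (hc.hsurj (some (g, i, l))).choose_spec.1

lemma jelt_phi (g : G) (i : I) (l : L) : φ (hc.jelt g i l) = some (g, i, l) :=
  (hc.hsurj (some (g, i, l))).choose_spec.2

lemma jelt_ne (g : G) (i : I) (l : L) : hc.jelt g i l ≠ 0 :=
  hc.ne_zero_of_phi (hc.jelt_mem g i l) (hc.jelt_phi g i l)

/-- T2 : same-row decomposition  (`j₂ = j₁ * k`). -/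
lemma decompR [Nonempty I] {j₁ j₂ : S} (h₁ : j₁ ∈ J) (h₂ : j₂ ∈ J) {g i l g₂ l₂}
    (hf₁ : φ j₁ = some (g, i, l)) (hf₂ : φ j₂ = some (g₂, i, l₂)) :
    ∃ k ∈ J, k ≠ 0 ∧ j₂ = j₁ * k := by
  classical
  set e₀ : I := Classical.arbitrary I
  set k := hc.jelt ((hc.pv l e₀)⁻¹ * g⁻¹ * g₂) e₀ l₂ with hk
  refine ⟨k, hc.jelt_mem _ _ _, hc.jelt_ne _ _ _, ?_⟩
  have hmul := hc.mulφ h₁ (hc.jelt_mem _ _ _) hf₁ (hc.jelt_phi ((hc.pv l e₀)⁻¹ * g⁻¹ * g₂) e₀ l₂)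
  have : φ (j₁ * k) = some (g₂, i, l₂) := by
    rw [hmul]
    congr 2
    group
  exact hc.hinj j₂ h₂ (j₁ * k) (hc.mulJr h₁ k) (hf₂.trans this.symm)

/-- T2' : same-column decomposition  (`j₂ = k * j₁`). -/
lemma decompL [Nonempty L] {j₁ j₂ : S} (h₁ : j₁ ∈ J) (h₂ : j₂ ∈ J) {g i l g₂ i₂}
    (hf₁ : φ j₁ = some (g, i, l)) (hf₂ : φ j₂ = some (g₂, i₂, l)) :
    ∃ k ∈ J, k ≠ 0 ∧ j₂ = k * j₁ := by
  classical
  set f₀ : L := Classical.arbitrary L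
  set k := hc.jelt (g₂ * g⁻¹ * (hc.pv f₀ i)⁻¹) i₂ f₀ with hk
  refine ⟨k, hc.jelt_mem _ _ _, hc.jelt_ne _ _ _, ?_⟩
  have hmul := hc.mulφ (hc.jelt_mem _ _ _) h₁ (hc.jelt_phi (g₂ * g⁻¹ * (hc.pv f₀ i)⁻¹) i₂ f₀) hf₁
  have : φ (k * j₁) = some (g₂, i₂, l) := by
    rw [hmul]
    congr 2
    group
  exact hc.hinj j₂ h₂ (k * j₁) (hc.mulJl h₁ k) (hf₂.trans this.symm)

/-- T3 : right multiplication by anything preserves the row. -/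
lemma rowR [Nonempty I] [Nonempty L] {j : S} (hj : j ∈ J) {g i l} (hf : φ j = some (g, i, l))
    (s : S) (hne : j * s ≠ 0) : ∃ g' l', φ (j * s) = some (g', i, l') := by
  classical
  set f₀ : L := Classical.arbitrary L
  set z := hc.jelt 1 i f₀ with hz
  obtain ⟨k, hk, hk0, hjk⟩ := hc.decompR (hc.jelt_mem 1 i f₀) hj (hc.jelt_phi 1 i f₀) hf
  have hks : k * s ∈ J := hc.mulJr hk s
  have hassoc : j * s = z * (k * s) := by rw [hjk, mul_assoc]
  have hks0 : k * s ≠ 0 := by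
    intro h
    exact hne (by rw [hassoc, h, mul_zero])
  obtain ⟨g2, i2, l2, hf2⟩ := hc.dat hks hks0
  refine ⟨1 * hc.pv f₀ i2 * g2, l2, ?_⟩
  rw [hassoc]
  exact hc.mulφ (hc.jelt_mem 1 i f₀) hks (hc.jelt_phi 1 i f₀) hf2

/-- T3' : left multiplication by anything preserves the column. -/
lemma colL [Nonempty I] [Nonempty L] {j : S} (hj : j ∈ J) {g i l} (hf : φ j = some (g, i, l))
    (s : S) (hne : s * j ≠ 0) : ∃ g' i', φ (s * j) = some (g', i', l) := by
  classical
  set e₀ : I := Classical.arbitrary I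
  set z := hc.jelt 1 e₀ l with hz
  obtain ⟨k, hk, hk0, hjk⟩ := hc.decompL (hc.jelt_mem 1 e₀ l) hj (hc.jelt_phi 1 e₀ l) hf
  have hks : s * k ∈ J := hc.mulJl hk s
  have hassoc : s * j = (s * k) * z := by rw [hjk, ← mul_assoc]
  have hks0 : s * k ≠ 0 := by
    intro h
    exact hne (by rw [hassoc, h, zero_mul])
  obtain ⟨g2, i2, l2, hf2⟩ := hc.dat hks hks0
  refine ⟨g2 * hc.pv l2 e₀ * 1, i2, ?_⟩
  rw [hassoc]
  exact hc.mulφ hks (hc.jelt_mem 1 e₀ l) hf2 (hc.jelt_phi 1 e₀ l)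

/-- T4 : vanishing and row of `s * j` only depend on the row of `j`. -/
lemma leftUnif [Nonempty I] [Nonempty L] (s : S) {j₁ j₂ : S} (h₁ : j₁ ∈ J) (h₂ : j₂ ∈ J)
    {g₁ i l₁ g₂ l₂} (hf₁ : φ j₁ = some (g₁, i, l₁)) (hf₂ : φ j₂ = some (g₂, i, l₂))
    (hne : s * j₁ ≠ 0) :
    s * j₂ ≠ 0 ∧ ∀ g' i' l', φ (s * j₁) = some (g', i', l') →
      ∃ g'', φ (s * j₂) = some (g'', i', l₂) := by
  obtain ⟨k, hk, hk0, hjk⟩ := hc.decompR h₁ h₂ hf₁ hf₂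
  have hs1 : s * j₁ ∈ J := hc.mulJl h₁ s
  have hassoc : s * j₂ = (s * j₁) * k := by rw [hjk, ← mul_assoc]
  obtain ⟨gk, ik, lk, hfk⟩ := hc.dat hk hk0
  have hkcol : lk = l₂ := by
    have h5 := hc.mulφ h₁ hk hf₁ hfk
    rw [← hjk, hf₂] at h5
    have h6 := Option.some.inj h5
    exact (congrArg (fun q => q.2.2) h6).symm
  constructor
  · obtain ⟨g', i', l', hf'⟩ := hc.dat hs1 hne
    rw [hassoc]
    exact hc.ne_zero_of_phi (hc.mulJr hs1 k) (hc.mulφ hs1 hk hf' hfk)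
  · intro ga ia la hfa
    refine ⟨ga * hc.pv la ik * gk, ?_⟩
    rw [hassoc, hc.mulφ hs1 hk hfa hfk, hkcol]

/-- T4' : vanishing and column of `j * s` only depend on the column of `j`. -/
lemma rightUnif [Nonempty I] [Nonempty L] (s : S) {j₁ j₂ : S} (h₁ : j₁ ∈ J) (h₂ : j₂ ∈ J)
    {g₁ i₁ l g₂ i₂} (hf₁ : φ j₁ = some (g₁, i₁, l)) (hf₂ : φ j₂ = some (g₂, i₂, l))
    (hne : j₁ * s ≠ 0) :
    j₂ * s ≠ 0 ∧ ∀ g' i' l', φ (j₁ * s) = some (g', i', l') →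
      ∃ g'', φ (j₂ * s) = some (g'', i₂, l') := by
  obtain ⟨k, hk, hk0, hjk⟩ := hc.decompL h₁ h₂ hf₁ hf₂
  have hs1 : j₁ * s ∈ J := hc.mulJr h₁ s
  have hassoc : j₂ * s = k * (j₁ * s) := by rw [hjk, mul_assoc]
  obtain ⟨gk, ik, lk, hfk⟩ := hc.dat hk hk0
  have hkrow : ik = i₂ := by
    have h5 := hc.mulφ hk h₁ hfk hf₁
    rw [← hjk, hf₂] at h5
    have h6 := Option.some.inj h5
    exact (congrArg (fun q => q.2.1) h6).symm
  constructor
  · obtain ⟨g', i', l', hf'⟩ := hc.dat hs1 hne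
    rw [hassoc]
    exact hc.ne_zero_of_phi (hc.mulJl hs1 k) (hc.mulφ hk hs1 hfk hf')
  · intro ga ia la hfa
    refine ⟨gk * hc.pv lk ia * ga, ?_⟩
    rw [hassoc, hc.mulφ hk hs1 hfk hfa, hkrow]

end RC
end Batch2
section Batch3

/-- `apow a n = a^(n+1)` in a bare semigroup. -/
def apow {S : Type*} [Semigroup S] (a : S) : ℕ → S
  | 0 => a
  | n + 1 => a * apow a n

lemma apow_add {S : Type*} [Semigroup S] (a : S) (m n : ℕ) :
    apow a m * apow a n = apow a (m + n + 1) := by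
  induction m with
  | zero => rw [Nat.zero_add]; rfl
  | succ k ih =>
    show a * apow a k * apow a n = apow a (k + 1 + n + 1)
    rw [mul_assoc, ih]
    have : k + 1 + n + 1 = (k + n + 1) + 1 := by omega
    rw [this]
    rfl

lemma apow_comm {S : Type*} [Semigroup S] (a : S) (m n : ℕ) :
    apow a m * apow a n = apow a n * apow a m := by
  rw [apow_add, apow_add, Nat.add_comm m n]

/-- The elements of `S` on which `Φ` will be non-zero. -/
def LiveSet {S : Type*} [SemigroupWithZero S] (J : Set S) : Set S := Fset J ∪ (J \ {0})

/-- row extraction (with junk value) -/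
noncomputable def rowth {S G I L : Type*} [Nonempty I] {P : L → I → Option G}
    (φ : S → ReesM0 G I L P) (t : S) : I :=
  open Classical in
  if h : ∃ q : G × I × L, φ t = some q then h.choose.2.1 else Classical.arbitrary I

lemma rowth_spec {S G I L : Type*} [Nonempty I] {P : L → I → Option G}
    (φ : S → ReesM0 G I L P) {t : S} {g : G} {i : I} {l : L}
    (h : φ t = some (g, i, l)) : rowth φ t = i := by
  have hex : ∃ q : G × I × L, φ t = some q := ⟨(g, i, l), h⟩
  rw [rowth, dif_pos hex]
  have h4 : (some hex.choose : Option (G × I × L)) = some (g, i, l) :=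
    hex.choose_spec.symm.trans h
  exact congrArg (fun q : G × I × L => q.2.1) (Option.some.inj h4)

/-- column extraction (with junk value) -/
noncomputable def colth {S G I L : Type*} [Nonempty L] {P : L → I → Option G}
    (φ : S → ReesM0 G I L P) (t : S) : L :=
  open Classical in
  if h : ∃ q : G × I × L, φ t = some q then h.choose.2.2 else Classical.arbitrary L

lemma colth_spec {S G I L : Type*} [Nonempty L] {P : L → I → Option G}
    (φ : S → ReesM0 G I L P) {t : S} {g : G} {i : I} {l : L}
    (h : φ t = some (g, i, l)) : colth φ t = l := by
  have hex : ∃ q : G × I × L, φ t = some q := ⟨(g, i, l), h⟩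
  rw [colth, dif_pos hex]
  have h4 : (some hex.choose : Option (G × I × L)) = some (g, i, l) :=
    hex.choose_spec.symm.trans h
  exact congrArg (fun q : G × I × L => q.2.2) (Option.some.inj h4)

namespace RC

variable {S : Type*} [SemigroupWithZero S] {G I L : Type*} [Group G]
  {P : L → I → Option G} {J : Set S} {φ : S → ReesM0 G I L P}
  [Nonempty I] [Nonempty L]
  (hc : RC P J φ)

include hc
set_option linter.unusedSectionVars false

/-- a fixed non-zero element of `J` -/
noncomputable def jstar : S := hc.jelt 1 (Classical.arbitrary I) (Classical.arbitrary L)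

lemma jstar_mem : hc.jstar ∈ J := hc.jelt_mem _ _ _
lemma jstar_phi : φ hc.jstar = some (1, Classical.arbitrary I, Classical.arbitrary L) :=
  hc.jelt_phi _ _ _
lemma jstar_ne : hc.jstar ≠ 0 := hc.jelt_ne _ _ _

/-- S1 : a live element acts without vanishing on both sides. -/
lemma s1 {a : S} (ha : a ∈ LiveSet J) : ∀ j ∈ J, j ≠ 0 → a * j ≠ 0 ∧ j * a ≠ 0 := by
  -- Step 1 : some one-sided witness
  have step1 : ∃ j1 ∈ J, j1 ≠ 0 ∧ (a * j1 ≠ 0 ∨ j1 * a ≠ 0) := by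
    rcases ha with hF | hJ0
    · obtain ⟨hnJ, j, hj, hor⟩ := hF
      have hj0 : j ≠ 0 := by
        rintro rfl
        rcases hor with h | h
        · exact h (mul_zero a)
        · exact h (zero_mul a)
      exact ⟨j, hj, hj0, hor⟩
    · refine ⟨hc.jstar, hc.jstar_mem, hc.jstar_ne, Or.inl ?_⟩
      exact hc.mul_ne_zero' hJ0.1 hc.jstar_mem hJ0.2 hc.jstar_ne
  -- Step 2 : a left witness ( j2 * a ≠ 0 )
  have step2 : ∃ j2 ∈ J, j2 ≠ 0 ∧ j2 * a ≠ 0 := by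
    by_contra hcon
    push_neg at hcon
    obtain ⟨j1, hj1, hj10, hor⟩ := step1
    have hja : j1 * a = 0 := hcon j1 hj1 hj10
    have haj : a * j1 ≠ 0 := by
      rcases hor with h | h
      · exact h
      · exact absurd hja h
    have hu : a * j1 ∈ J := hc.mulJl hj1 a
    have huu : (a * j1) * (a * j1) ≠ 0 := hc.mul_ne_zero' hu hu haj haj
    apply huu
    calc (a * j1) * (a * j1) = a * (j1 * (a * j1)) := by rw [mul_assoc]
      _ = a * ((j1 * a) * j1) := by rw [mul_assoc]
      _ = a * (0 * j1) := by rw [hja]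
      _ = 0 := by rw [zero_mul, mul_zero]
  obtain ⟨j2, hj2, hj20, hj2a⟩ := step2
  -- Step 3 : all right products are non-zero
  have step3 : ∀ j ∈ J, j ≠ 0 → a * j ≠ 0 := by
    intro j hj hj0
    have h1 : j2 * a ∈ J := hc.mulJr hj2 a
    have h2 : (j2 * a) * j ≠ 0 := hc.mul_ne_zero' h1 hj hj2a hj0
    intro h
    rw [mul_assoc, h, mul_zero] at h2
    exact h2 rfl
  -- Step 4 : all left products are non-zero
  intro j hj hj0
  refine ⟨step3 j hj hj0, ?_⟩
  have haj : a * hc.jstar ≠ 0 := step3 _ hc.jstar_mem hc.jstar_ne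
  have h1 : a * hc.jstar ∈ J := hc.mulJl hc.jstar_mem a
  have h2 : j * (a * hc.jstar) ≠ 0 := hc.mul_ne_zero' hj h1 hj0 haj
  intro h
  rw [← mul_assoc, h, zero_mul] at h2
  exact h2 rfl

/-- the row–action function of `a` -/
noncomputable def rfn (a : S) (i : I) : I :=
  rowth φ (a * hc.jelt 1 i (Classical.arbitrary L))

/-- the column–action function of `a` -/
noncomputable def cfn (a : S) (l : L) : L :=
  colth φ (hc.jelt 1 (Classical.arbitrary I) l * a)

/-- the left action of a live element on a non-zero element of `J`. -/
lemma actL {a : S} (ha : a ∈ LiveSet J) {j : S} (hj : j ∈ J) {g i l}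
    (hf : φ j = some (g, i, l)) :
    a * j ∈ J ∧ a * j ≠ 0 ∧ ∃ g', φ (a * j) = some (g', hc.rfn a i, l) := by
  have hzm := hc.jelt_mem 1 i (Classical.arbitrary L)
  have hzp := hc.jelt_phi 1 i (Classical.arbitrary L)
  have hzn := hc.jelt_ne 1 i (Classical.arbitrary L)
  have haz : a * hc.jelt 1 i (Classical.arbitrary L) ≠ 0 :=
    (hc.s1 ha _ hzm hzn).1
  have hu := hc.leftUnif a hzm hj hzp hf haz
  obtain ⟨g1, i1, l1, hf1⟩ := hc.dat (hc.mulJl hzm a) haz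
  have hrow : hc.rfn a i = i1 := rowth_spec φ hf1
  obtain ⟨g'', hg''⟩ := hu.2 g1 i1 l1 hf1
  exact ⟨hc.mulJl hj a, hu.1, g'', by rw [hrow]; exact hg''⟩

/-- the right action of a live element on a non-zero element of `J`. -/
lemma actR {a : S} (ha : a ∈ LiveSet J) {j : S} (hj : j ∈ J) {g i l}
    (hf : φ j = some (g, i, l)) :
    j * a ∈ J ∧ j * a ≠ 0 ∧ ∃ g', φ (j * a) = some (g', i, hc.cfn a l) := by
  have hzm := hc.jelt_mem 1 (Classical.arbitrary I) l
  have hzp := hc.jelt_phi 1 (Classical.arbitrary I) l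
  have hzn := hc.jelt_ne 1 (Classical.arbitrary I) l
  have haz : hc.jelt 1 (Classical.arbitrary I) l * a ≠ 0 :=
    (hc.s1 ha _ hzm hzn).2
  have hu := hc.rightUnif a hzm hj hzp hf haz
  obtain ⟨g1, i1, l1, hf1⟩ := hc.dat (hc.mulJr hzm a) haz
  have hcol : hc.cfn a l = l1 := colth_spec φ hf1
  obtain ⟨g'', hg''⟩ := hu.2 g1 i1 l1 hf1
  exact ⟨hc.mulJr hj a, hu.1, g'', by rw [hcol]; exact hg''⟩

/-- powers of a live element are live. -/
lemma apow_live {a : S} (ha : a ∈ LiveSet J) : ∀ k, apow a k ∈ LiveSet J := by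
  intro k
  induction k with
  | zero => exact ha
  | succ n ih =>
    show a * apow a n ∈ LiveSet J
    have h1 : apow a n * hc.jstar ∈ J := hc.mulJl hc.jstar_mem _
    have h10 : apow a n * hc.jstar ≠ 0 := (hc.s1 ih _ hc.jstar_mem hc.jstar_ne).1
    have h2 : a * (apow a n * hc.jstar) ≠ 0 := (hc.s1 ha _ h1 h10).1
    have h3 : (a * apow a n) * hc.jstar ≠ 0 := by rw [mul_assoc]; exact h2
    by_cases hmem : a * apow a n ∈ J
    · right
      refine ⟨hmem, ?_⟩
      intro h
      rw [Set.mem_singleton_iff] at h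
      rw [h, zero_mul] at h3
      exact h3 rfl
    · left
      exact ⟨hmem, hc.jstar, hc.jstar_mem, Or.inl h3⟩

lemma rfn_succ {a : S} (ha : a ∈ LiveSet J) (k : ℕ) (i : I) :
    hc.rfn (apow a (k+1)) i = hc.rfn a (hc.rfn (apow a k) i) := by
  have hzm := hc.jelt_mem 1 i (Classical.arbitrary L)
  have hzp := hc.jelt_phi 1 i (Classical.arbitrary L)
  obtain ⟨h1, h2, g1, hf1⟩ := hc.actL (hc.apow_live ha k) hzm hzp
  obtain ⟨h1', h2', g2, hf2⟩ := hc.actL ha h1 hf1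
  have hassoc : apow a (k+1) * hc.jelt 1 i (Classical.arbitrary L)
      = a * (apow a k * hc.jelt 1 i (Classical.arbitrary L)) := by
    show (a * apow a k) * _ = _
    rw [mul_assoc]
  rw [rfn, hassoc]
  exact rowth_spec φ hf2

lemma cfn_succ {a : S} (ha : a ∈ LiveSet J) (k : ℕ) (l : L) :
    hc.cfn (apow a (k+1)) l = hc.cfn a (hc.cfn (apow a k) l) := by
  have hzm := hc.jelt_mem 1 (Classical.arbitrary I) l
  have hzp := hc.jelt_phi 1 (Classical.arbitrary I) l
  obtain ⟨h1, h2, g1, hf1⟩ := hc.actR (hc.apow_live ha k) hzm hzp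
  obtain ⟨h1', h2', g2, hf2⟩ := hc.actR ha h1 hf1
  have hp : apow a (k + 1) = apow a k * a := (apow_add a k 0).symm
  have hassoc : hc.jelt 1 (Classical.arbitrary I) l * apow a (k+1)
      = (hc.jelt 1 (Classical.arbitrary I) l * apow a k) * a := by
    rw [hp, mul_assoc]
  rw [cfn, hassoc]
  exact colth_spec φ hf2

end RC
end Batch3
section Batch4
namespace RC

variable {S : Type*} [SemigroupWithZero S] {G I L : Type*} [Group G]
  {P : L → I → Option G} {J : Set S} {φ : S → ReesM0 G I L P}
  [Nonempty I] [Nonempty L]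
  (hc : RC P J φ)

include hc
set_option linter.unusedSectionVars false

/-- Engine instance: two live elements with different row actions are impossible
if they generate a Mal'cev nilpotent subsemigroup. -/
lemma engRow [Finite S] (hPN : IsPN S) {x y : S} (hx : x ∈ LiveSet J) (hy : y ∈ LiveSet J)
    (hxy : x ≠ y)
    (hmn : SetMNMod (∅ : Set S) (Subsemigroup.closure ({x, y} : Set S) : Set S))
    {i₂ : I} (hrr : hc.rfn x i₂ ≠ hc.rfn y i₂) : False := by
  classical
  set z := hc.jelt 1 i₂ (Classical.arbitrary L) with hzdef
  set w : ℕ → Option S := fun n => if n = 0 then some z else some hc.jstar with hwdef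
  have inv : ∀ n, 1 ≤ n → ((malcev x y w n).1 ∈ J ∧ (malcev x y w n).2 ∈ J ∧
      (∃ g l, φ (malcev x y w n).1 = some (g, hc.rfn x i₂, l)) ∧
      (∃ g l, φ (malcev x y w n).2 = some (g, hc.rfn y i₂, l))) := by
    intro n hn
    induction n with
    | zero => omega
    | succ m ih =>
      by_cases hm : 1 ≤ m
      · obtain ⟨hJ1, hJ2, ⟨g1, l1, hf1⟩, ⟨g2, l2, hf2⟩⟩ := ih hm
        have hw : w m = some hc.jstar := by
          simp [hwdef, Nat.one_le_iff_ne_zero.mp hm]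
        rw [malcev_succ, hw]
        have e1 := hc.mulφ hJ1 hc.jstar_mem hf1 hc.jstar_phi
        have e2 := hc.mulφ (hc.mulJr hJ1 _) hJ2 e1 hf2
        have e3 := hc.mulφ hJ2 hc.jstar_mem hf2 hc.jstar_phi
        have e4 := hc.mulφ (hc.mulJr hJ2 _) hJ1 e3 hf1
        exact ⟨hc.mulJr (hc.mulJr hJ1 _) _, hc.mulJr (hc.mulJr hJ2 _) _,
          ⟨_, _, e2⟩, ⟨_, _, e4⟩⟩
      · have hm0 : m = 0 := by omega
        subst hm0
        have hw : w 0 = some z := by simp [hwdef]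
        rw [malcev_succ, hw]
        show (x * z * y ∈ J) ∧ (y * z * x ∈ J) ∧ _
        obtain ⟨hxzJ, hxz0, gx, hfxz⟩ := hc.actL hx (hc.jelt_mem 1 i₂ _) (hc.jelt_phi 1 i₂ _)
        obtain ⟨hJ1, h10, gx2, hfxzy⟩ := hc.actR hy hxzJ hfxz
        obtain ⟨hyzJ, hyz0, gy, hfyz⟩ := hc.actL hy (hc.jelt_mem 1 i₂ _) (hc.jelt_phi 1 i₂ _)
        obtain ⟨hJ2, h20, gy2, hfyzx⟩ := hc.actR hx hyzJ hfyz
        exact ⟨hJ1, hJ2, ⟨_, _, hfxzy⟩, ⟨_, _, hfyzx⟩⟩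
  have hneq : ∀ n, (malcev x y w n).1 ≠ (malcev x y w n).2 := by
    intro n
    by_cases hn : 1 ≤ n
    · obtain ⟨hJ1, hJ2, ⟨g1, l1, hf1⟩, ⟨g2, l2, hf2⟩⟩ := inv n hn
      intro h
      rw [h, hf2] at hf1
      exact hrr (congrArg (fun q : G × I × L => q.2.1) (Option.some.inj hf1)).symm
    · have : n = 0 := by omega
      rw [this]
      exact hxy
  exact engine hPN x y w hneq hmn

/-- Engine instance, column version. -/
lemma engCol [Finite S] (hPN : IsPN S) {x y : S} (hx : x ∈ LiveSet J) (hy : y ∈ LiveSet J)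
    (hxy : x ≠ y)
    (hmn : SetMNMod (∅ : Set S) (Subsemigroup.closure ({x, y} : Set S) : Set S))
    {μ₂ : L} (hcc : hc.cfn x μ₂ ≠ hc.cfn y μ₂) : False := by
  classical
  set z := hc.jelt 1 (Classical.arbitrary I) μ₂ with hzdef
  set w : ℕ → Option S := fun n => if n = 0 then some z else some hc.jstar with hwdef
  have inv : ∀ n, 1 ≤ n → ((malcev x y w n).1 ∈ J ∧ (malcev x y w n).2 ∈ J ∧
      ∃ c1 c2 g1 i1 g2 i2, c1 ≠ c2 ∧ φ (malcev x y w n).1 = some (g1, i1, c1) ∧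
        φ (malcev x y w n).2 = some (g2, i2, c2)) := by
    intro n hn
    induction n with
    | zero => omega
    | succ m ih =>
      by_cases hm : 1 ≤ m
      · obtain ⟨hJ1, hJ2, c1, c2, g1, i1, g2, i2, hc12, hf1, hf2⟩ := ih hm
        have hw : w m = some hc.jstar := by
          simp [hwdef, Nat.one_le_iff_ne_zero.mp hm]
        rw [malcev_succ, hw]
        have e1 := hc.mulφ hJ1 hc.jstar_mem hf1 hc.jstar_phi
        have e2 := hc.mulφ (hc.mulJr hJ1 _) hJ2 e1 hf2
        have e3 := hc.mulφ hJ2 hc.jstar_mem hf2 hc.jstar_phi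
        have e4 := hc.mulφ (hc.mulJr hJ2 _) hJ1 e3 hf1
        exact ⟨hc.mulJr (hc.mulJr hJ1 _) _, hc.mulJr (hc.mulJr hJ2 _) _,
          c2, c1, _, _, _, _, hc12.symm, e2, e4⟩
      · have hm0 : m = 0 := by omega
        subst hm0
        have hw : w 0 = some z := by simp [hwdef]
        rw [malcev_succ, hw]
        show (x * z * y ∈ J) ∧ (y * z * x ∈ J) ∧ _
        obtain ⟨hzyJ, hzy0, gy, hfzy⟩ := hc.actR hy (hc.jelt_mem 1 _ μ₂) (hc.jelt_phi 1 _ μ₂)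
        obtain ⟨hJ1', h10, gx2, hfxzy⟩ := hc.actL hx hzyJ hfzy
        obtain ⟨hzxJ, hzx0, gx, hfzx⟩ := hc.actR hx (hc.jelt_mem 1 _ μ₂) (hc.jelt_phi 1 _ μ₂)
        obtain ⟨hJ2', h20, gy2, hfyzx⟩ := hc.actL hy hzxJ hfzx
        rw [← mul_assoc] at hfxzy hfyzx
        refine ⟨?_, ?_, hc.cfn y μ₂, hc.cfn x μ₂, _, _, _, _, hcc.symm, hfxzy, hfyzx⟩
        · have := hc.mulJl hzyJ x
          rwa [← mul_assoc] at this
        · have := hc.mulJl hzxJ y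
          rwa [← mul_assoc] at this
  have hneq : ∀ n, (malcev x y w n).1 ≠ (malcev x y w n).2 := by
    intro n
    by_cases hn : 1 ≤ n
    · obtain ⟨hJ1, hJ2, c1, c2, g1, i1, g2, i2, hc12, hf1, hf2⟩ := inv n hn
      intro h
      rw [h, hf2] at hf1
      exact hc12 (congrArg (fun q : G × I × L => q.2.2) (Option.some.inj hf1)).symm
    · have : n = 0 := by omega
      rw [this]
      exact hxy
  exact engine hPN x y w hneq hmn

/-- all powers of a live element have the same row action. -/
lemma rfn_apow_eq [Finite S] (hPN : IsPN S) {a : S} (ha : a ∈ LiveSet J) (s s' : ℕ) (i : I) :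
    hc.rfn (apow a s) i = hc.rfn (apow a s') i := by
  by_contra hne
  have hxy : apow a s ≠ apow a s' := fun h => hne (by rw [h])
  exact hc.engRow hPN (hc.apow_live ha s) (hc.apow_live ha s') hxy
    (setMNMod_of_comm _ (apow_comm a s s')) hne

/-- all powers of a live element have the same column action. -/
lemma cfn_apow_eq [Finite S] (hPN : IsPN S) {a : S} (ha : a ∈ LiveSet J) (s s' : ℕ) (l : L) :
    hc.cfn (apow a s) l = hc.cfn (apow a s') l := by
  by_contra hne
  have hxy : apow a s ≠ apow a s' := fun h => hne (by rw [h])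
  exact hc.engCol hPN (hc.apow_live ha s) (hc.apow_live ha s') hxy
    (setMNMod_of_comm _ (apow_comm a s s')) hne

end RC
end Batch4
section Batch5

/-- group component extraction (junk value 1) -/
noncomputable def gth {S G I L : Type*} [Group G] {P : L → I → Option G}
    (φ : S → ReesM0 G I L P) (t : S) : G :=
  open Classical in
  if h : ∃ q : G × I × L, φ t = some q then h.choose.1 else 1

lemma gth_spec {S G I L : Type*} [Group G] {P : L → I → Option G}
    (φ : S → ReesM0 G I L P) {t : S} {g : G} {i : I} {l : L}
    (h : φ t = some (g, i, l)) : gth φ t = g := by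
  have hex : ∃ q : G × I × L, φ t = some q := ⟨(g, i, l), h⟩
  rw [gth, dif_pos hex]
  have h4 : (some hex.choose : Option (G × I × L)) = some (g, i, l) :=
    hex.choose_spec.symm.trans h
  exact congrArg (fun q : G × I × L => q.1) (Option.some.inj h4)

namespace RC

variable {S : Type*} [SemigroupWithZero S] {G I L : Type*} [Group G]
  {P : L → I → Option G} {J : Set S} {φ : S → ReesM0 G I L P}
  [Nonempty I] [Nonempty L]
  (hc : RC P J φ)

include hc
set_option linter.unusedSectionVars false

/-- the canonical copy of `G` inside the `(iv, lv)` H-class. -/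
noncomputable def th (iv : I) (lv : L) (g : G) : S :=
  hc.jelt (g * (hc.pv lv iv)⁻¹) iv lv

lemma th_mem (iv : I) (lv : L) (g : G) : hc.th iv lv g ∈ J := hc.jelt_mem _ _ _
lemma th_phi (iv : I) (lv : L) (g : G) :
    φ (hc.th iv lv g) = some (g * (hc.pv lv iv)⁻¹, iv, lv) := hc.jelt_phi _ _ _
lemma th_ne (iv : I) (lv : L) (g : G) : hc.th iv lv g ≠ 0 := hc.jelt_ne _ _ _

lemma th_mul (iv : I) (lv : L) (g h : G) :
    hc.th iv lv g * hc.th iv lv h = hc.th iv lv (g * h) := by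
  have h1 := hc.mulφ (hc.th_mem iv lv g) (hc.th_mem iv lv h) (hc.th_phi iv lv g)
    (hc.th_phi iv lv h)
  have h2 : φ (hc.th iv lv g * hc.th iv lv h) = some (g * h * (hc.pv lv iv)⁻¹, iv, lv) := by
    rw [h1]
    congr 2
    group
  exact hc.hinj _ (hc.mulJr (hc.th_mem iv lv g) _) _ (hc.th_mem iv lv (g*h))
    (h2.trans (hc.th_phi iv lv (g*h)).symm)

lemma th_inj (iv : I) (lv : L) {g g' : G} (h : hc.th iv lv g = hc.th iv lv g') : g = g' := by
  have h1 := hc.th_phi iv lv g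
  rw [h, hc.th_phi iv lv g'] at h1
  have h2 := congrArg (fun q : G × I × L => q.1) (Option.some.inj h1)
  simpa using h2.symm

/-- `G` is finite. -/
lemma finG [Finite S] : Finite G :=
  Finite.of_injective (fun g => hc.th (Classical.arbitrary I) (Classical.arbitrary L) g)
    (fun g g' h => hc.th_inj _ _ h)

/-- The structure group `G` is nilpotent. -/
lemma Gnil [Finite S] (hPN : IsPN S) : Group.IsNilpotent G := by
  classical
  by_contra hnot
  have hfinG : Finite G := hc.finG
  obtain ⟨K, h1K, ⟨d₀, hd₀⟩, hKstep⟩ := ucs_stab hnot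
  set uch : G → G := fun d =>
    if h : ∃ u, d * u * d⁻¹ * u⁻¹ ∉ K then h.choose else 1 with huch
  have uch_spec : ∀ d, d ∉ K → d * uch d * d⁻¹ * (uch d)⁻¹ ∉ K := by
    intro d hd
    have hex : ∃ u, d * u * d⁻¹ * u⁻¹ ∉ K := hKstep d hd
    have he : uch d = hex.choose := by rw [huch]; exact dif_pos hex
    rw [he]
    exact hex.choose_spec
  set step : G × G → G × G := fun q =>
    (q.1 * (q.2⁻¹ * uch (q.1 * q.2⁻¹)) * q.2,
     q.2 * (q.2⁻¹ * uch (q.1 * q.2⁻¹)) * q.1) with hstep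
  set gp : ℕ → G × G := fun n => step^[n] (d₀, 1) with hgp
  have gp_succ : ∀ n, gp (n+1) = step (gp n) := fun n =>
    Function.iterate_succ_apply' step n _
  have gpK : ∀ n, (gp n).1 * ((gp n).2)⁻¹ ∉ K := by
    intro n
    induction n with
    | zero => simpa [hgp] using hd₀
    | succ m ih =>
      rw [gp_succ]
      have halg : (step (gp m)).1 * ((step (gp m)).2)⁻¹ =
          ((gp m).1 * ((gp m).2)⁻¹) * uch ((gp m).1 * ((gp m).2)⁻¹) *
            ((gp m).1 * ((gp m).2)⁻¹)⁻¹ * (uch ((gp m).1 * ((gp m).2)⁻¹))⁻¹ := by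
        rw [hstep]
        group
      rw [halg]
      exact uch_spec _ ih
  -- transport into S
  set eI : I := Classical.arbitrary I
  set fL : L := Classical.arbitrary L
  set x := hc.th eI fL d₀ with hx
  set y := hc.th eI fL 1 with hy
  set wseq : ℕ → Option S := fun n =>
    some (hc.th eI fL (((gp n).2)⁻¹ * uch ((gp n).1 * ((gp n).2)⁻¹))) with hwseq
  have corr : ∀ n, malcev x y wseq n = (hc.th eI fL (gp n).1, hc.th eI fL (gp n).2) := by
    intro n
    induction n with
    | zero => simp [hgp, malcev_zero, hx, hy]
    | succ m ih =>
      rw [malcev_succ, ih, gp_succ]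
      have e1 : mulW (hc.th eI fL (gp m).1) (wseq m) (hc.th eI fL (gp m).2)
          = hc.th eI fL ((gp m).1 * (((gp m).2)⁻¹ * uch ((gp m).1 * ((gp m).2)⁻¹)) * (gp m).2) := by
        show hc.th eI fL (gp m).1 * hc.th eI fL _ * hc.th eI fL (gp m).2 = _
        rw [hc.th_mul, hc.th_mul]
      have e2 : mulW (hc.th eI fL (gp m).2) (wseq m) (hc.th eI fL (gp m).1)
          = hc.th eI fL ((gp m).2 * (((gp m).2)⁻¹ * uch ((gp m).1 * ((gp m).2)⁻¹)) * (gp m).1) := by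
        show hc.th eI fL (gp m).2 * hc.th eI fL _ * hc.th eI fL (gp m).1 = _
        rw [hc.th_mul, hc.th_mul]
      rw [e1, e2]
  have hneq : ∀ n, (malcev x y wseq n).1 ≠ (malcev x y wseq n).2 := by
    intro n
    rw [corr n]
    intro h
    have h2 := hc.th_inj eI fL h
    apply gpK n
    rw [h2]
    simpa using h1K
  have hcomm : x * y = y * x := by
    rw [hx, hy, hc.th_mul, hc.th_mul, mul_one, one_mul]
  exact engine hPN x y wseq hneq (setMNMod_of_comm _ hcomm)

end RC
end Batch5
section Batch6

lemma malcev_shift {T : Type*} [Semigroup T] (x y : T) (w : ℕ → Option T) :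
    ∀ j, malcev x y w (j+1) =
      malcev (mulW x (w 0) y) (mulW y (w 0) x) (fun k => w (k+1)) j := by
  intro j
  induction j with
  | zero => rfl
  | succ m ih =>
    show (mulW (malcev x y w (m+1)).1 (w (m+1)) (malcev x y w (m+1)).2,
      mulW (malcev x y w (m+1)).2 (w (m+1)) (malcev x y w (m+1)).1) = _
    rw [ih]
    rfl

namespace RC

variable {S : Type*} [SemigroupWithZero S] {G I L : Type*} [Group G]
  {P : L → I → Option G} {J : Set S} {φ : S → ReesM0 G I L P}
  [Nonempty I] [Nonempty L]
  (hc : RC P J φ)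

include hc
set_option linter.unusedSectionVars false

/-- The sandwich lemma: if `a` stabilizes the `(iv,lv)` H-class (and all its powers
that fall in `J` lie in that H-class), then `⟨v, a⟩` is Mal'cev nilpotent for any
`v` in that H-class. -/
lemma sand (hGnil : Group.IsNilpotent G) {a : S} (ha : a ∈ LiveSet J)
    (iv : I) (lv : L)
    (hfr : hc.rfn a iv = iv) (hfc : hc.cfn a lv = lv)
    (hpows : ∀ k, apow a k ∈ J → ∃ g, φ (apow a k) = some (g, iv, lv))
    {v : S} (hvJ : v ∈ J) {gv : G} (hfv : φ v = some (gv, iv, lv)) :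
    SetMN (Subsemigroup.closure ({v, a} : Set S) : Set S) := by
  classical
  set HT : Set S := {t : S | t ∈ J ∧ ∃ g, φ t = some (g, iv, lv)} with hHT
  have hft : ∀ t ∈ HT, φ t = some (gth φ t, iv, lv) := by
    rintro t ⟨htJ, g, hg⟩
    rw [gth_spec φ hg]
    exact hg
  have hHmul : ∀ t ∈ HT, ∀ t' ∈ HT, t * t' ∈ HT := by
    intro t ht t' ht'
    have := hc.mulφ ht.1 ht'.1 (hft t ht) (hft t' ht')
    exact ⟨hc.mulJr ht.1 t', _, this⟩
  have haH : ∀ t ∈ HT, a * t ∈ HT ∧ t * a ∈ HT := by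
    intro t ht
    obtain ⟨h1, h2, g', hg'⟩ := hc.actL ha ht.1 (hft t ht)
    obtain ⟨h1', h2', g'', hg''⟩ := hc.actR ha ht.1 (hft t ht)
    rw [hfr] at hg'
    rw [hfc] at hg''
    exact ⟨⟨h1, g', hg'⟩, ⟨h1', g'', hg''⟩⟩
  have hpH : ∀ k, ∀ t ∈ HT, apow a k * t ∈ HT ∧ t * apow a k ∈ HT := by
    intro k
    induction k with
    | zero => exact fun t ht => haH t ht
    | succ m ih =>
      intro t ht
      constructor
      · have h1 : apow a (m+1) * t = a * (apow a m * t) := by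
          show (a * apow a m) * t = _
          rw [mul_assoc]
        rw [h1]
        exact (haH _ (ih t ht).1).1
      · have hp : apow a (m+1) = apow a m * a := by rw [← apow_add a m 0]; rfl
        have h1 : t * apow a (m+1) = (t * apow a m) * a := by rw [hp, ← mul_assoc]
        rw [h1]
        exact (haH _ (ih t ht).2).2
  -- the dichotomy for elements of the closure
  set CL : Set S := (Subsemigroup.closure ({v, a} : Set S) : Set S) with hCL
  have clQ : ∀ t ∈ Subsemigroup.closure ({v, a} : Set S),
      (∃ k, t = apow a k) ∨ t ∈ HT := by
    intro t ht
    induction ht using Subsemigroup.closure_induction with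
    | mem s hs =>
      rcases hs with rfl | rfl
      · exact Or.inr ⟨hvJ, gv, hfv⟩
      · exact Or.inl ⟨0, rfl⟩
    | mul s t' hs ht' qs qt =>
      rcases qs with ⟨k1, rfl⟩ | hsH
      · rcases qt with ⟨k2, rfl⟩ | htH
        · exact Or.inl ⟨k1 + k2 + 1, apow_add a k1 k2⟩
        · exact Or.inr (hpH k1 t' htH).1
      · rcases qt with ⟨k2, rfl⟩ | htH
        · exact Or.inr (hpH k2 s hsH).2
        · exact Or.inr (hHmul s hsH t' htH)
  have mixQ : ∀ s t : S, ((∃ k, s = apow a k) ∨ s ∈ HT) → ((∃ k, t = apow a k) ∨ t ∈ HT) →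
      (s ∈ HT ∨ t ∈ HT) → s * t ∈ HT := by
    rintro s t hs ht (hsH | htH)
    · rcases ht with ⟨k, rfl⟩ | htH
      · exact (hpH k s hsH).2
      · exact hHmul s hsH _ htH
    · rcases hs with ⟨k, rfl⟩ | hsH
      · exact (hpH k t htH).1
      · exact hHmul s hsH _ htH
  -- the identity element of the H-class
  set eps : S := hc.th iv lv 1 with heps
  have hepsH : eps ∈ HT := ⟨hc.th_mem iv lv 1, _, hc.th_phi iv lv 1⟩
  have epsL : ∀ t ∈ HT, eps * t = t := by
    intro t ht
    have h1 := hc.mulφ hepsH.1 ht.1 (hft eps hepsH) (hft t ht)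
    have h2 : gth φ eps = 1 * (hc.pv lv iv)⁻¹ := gth_spec φ (hc.th_phi iv lv 1)
    have h3 : φ (eps * t) = some (gth φ t, iv, lv) := by
      rw [h1, h2]
      congr 2
      group
    exact hc.hinj _ (hc.mulJr hepsH.1 t) t ht.1 (h3.trans (hft t ht).symm)
  have epsR : ∀ t ∈ HT, t * eps = t := by
    intro t ht
    have h1 := hc.mulφ ht.1 hepsH.1 (hft t ht) (hft eps hepsH)
    have h2 : gth φ eps = 1 * (hc.pv lv iv)⁻¹ := gth_spec φ (hc.th_phi iv lv 1)
    have h3 : φ (t * eps) = some (gth φ t, iv, lv) := by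
      rw [h1, h2]
      congr 2
      group
    exact hc.hinj _ (hc.mulJr ht.1 eps) t ht.1 (h3.trans (hft t ht).symm)
  have sandH : ∀ t ∈ Subsemigroup.closure ({v, a} : Set S), eps * t * eps ∈ HT := by
    intro t ht
    rcases clQ t ht with ⟨k, rfl⟩ | htH
    · exact hHmul _ (hpH k eps hepsH).2 eps hepsH
    · exact hHmul _ (hHmul eps hepsH t htH) eps hepsH
  -- the group correspondence
  set ψ : S → G := fun t => gth φ t * hc.pv lv iv with hψ
  have psi_mul : ∀ t ∈ HT, ∀ t' ∈ HT, ψ (t * t') = ψ t * ψ t' := by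
    intro t ht t' ht'
    have h1 := hc.mulφ ht.1 ht'.1 (hft t ht) (hft t' ht')
    have h2 : gth φ (t * t') = gth φ t * hc.pv lv iv * gth φ t' := gth_spec φ h1
    rw [hψ]
    simp only []
    rw [h2]
    group
  have psi_injH : ∀ t ∈ HT, ∀ t' ∈ HT, ψ t = ψ t' → t = t' := by
    intro t ht t' ht' h
    have h2 : gth φ t = gth φ t' := by
      have := mul_right_cancel (b := hc.pv lv iv) h
      exact this
    exact hc.hinj t ht.1 t' ht'.1 ((hft t ht).trans (by rw [h2, ← hft t' ht']))
  obtain ⟨nG, hnGpos, hbound⟩ := gmalcev_bound hGnil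
  refine ⟨nG + 1, by omega, ?_⟩
  intro u1 hu1 u2 hu2 w hw
  -- step 1 dichotomy
  have hQ1 := clQ u1 hu1
  have hQ2 := clQ u2 hu2
  have hstep1 : (malcev u1 u2 w 1).1 = (malcev u1 u2 w 1).2 ∨
      ((malcev u1 u2 w 1).1 ∈ HT ∧ (malcev u1 u2 w 1).2 ∈ HT) := by
    have hm1 : malcev u1 u2 w 1 = (mulW u1 (w 0) u2, mulW u2 (w 0) u1) := rfl
    rw [hm1]
    cases hw0 : w 0 with
    | none =>
      show (u1 * u2 = u2 * u1) ∨ (u1 * u2 ∈ HT ∧ u2 * u1 ∈ HT)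
      rcases hQ1 with ⟨k1, rfl⟩ | h1H
      · rcases hQ2 with ⟨k2, rfl⟩ | h2H
        · exact Or.inl (apow_comm a k1 k2)
        · exact Or.inr ⟨mixQ _ _ (Or.inl ⟨k1, rfl⟩) (Or.inr h2H) (Or.inr h2H),
            mixQ _ _ (Or.inr h2H) (Or.inl ⟨k1, rfl⟩) (Or.inl h2H)⟩
      · exact Or.inr ⟨mixQ _ _ (Or.inr h1H) hQ2 (Or.inl h1H),
          mixQ _ _ hQ2 (Or.inr h1H) (Or.inr h1H)⟩
    | some c =>
      have hcQ : (∃ k, c = apow a k) ∨ c ∈ HT := clQ c (hw 0 c hw0)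
      show (u1 * c * u2 = u2 * c * u1) ∨ (u1 * c * u2 ∈ HT ∧ u2 * c * u1 ∈ HT)
      rcases hQ1 with ⟨k1, rfl⟩ | h1H
      · rcases hQ2 with ⟨k2, rfl⟩ | h2H
        · rcases hcQ with ⟨kc, rfl⟩ | hcH
          · left
            rw [apow_add, apow_add, apow_add, apow_add]
            congr 1
            omega
          · right
            constructor
            · exact mixQ _ _ (Or.inr (mixQ _ _ (Or.inl ⟨k1, rfl⟩) (Or.inr hcH) (Or.inr hcH)))
                (Or.inl ⟨k2, rfl⟩) (Or.inl (mixQ _ _ (Or.inl ⟨k1, rfl⟩) (Or.inr hcH) (Or.inr hcH)))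
            · exact mixQ _ _ (Or.inr (mixQ _ _ (Or.inl ⟨k2, rfl⟩) (Or.inr hcH) (Or.inr hcH)))
                (Or.inl ⟨k1, rfl⟩) (Or.inl (mixQ _ _ (Or.inl ⟨k2, rfl⟩) (Or.inr hcH) (Or.inr hcH)))
        · right
          have h1 : apow a k1 * c * u2 ∈ HT := by
            apply mixQ _ _ _ (Or.inr h2H) (Or.inr h2H)
            rcases hcQ with ⟨kc, rfl⟩ | hcH
            · exact Or.inl ⟨k1 + kc + 1, apow_add a k1 kc⟩
            · exact Or.inr (mixQ _ _ (Or.inl ⟨k1, rfl⟩) (Or.inr hcH) (Or.inr hcH))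
          have h2 : u2 * c * apow a k1 ∈ HT := by
            have hu2c : u2 * c ∈ HT := mixQ _ _ (Or.inr h2H) hcQ (Or.inl h2H)
            exact mixQ _ _ (Or.inr hu2c) (Or.inl ⟨k1, rfl⟩) (Or.inl hu2c)
          exact ⟨h1, h2⟩
      · right
        have hu1c : u1 * c ∈ HT := mixQ _ _ (Or.inr h1H) hcQ (Or.inl h1H)
        have h1 : u1 * c * u2 ∈ HT := mixQ _ _ (Or.inr hu1c) hQ2 (Or.inl hu1c)
        have h2 : u2 * c * u1 ∈ HT := by
          have hu2c : (∃ k, u2 * c = apow a k) ∨ u2 * c ∈ HT := by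
            rcases hQ2 with ⟨k2, rfl⟩ | h2H
            · rcases hcQ with ⟨kc, rfl⟩ | hcH
              · exact Or.inl ⟨k2 + kc + 1, apow_add a k2 kc⟩
              · exact Or.inr (mixQ _ _ (Or.inl ⟨k2, rfl⟩) (Or.inr hcH) (Or.inr hcH))
            · exact Or.inr (mixQ _ _ (Or.inr h2H) hcQ (Or.inl h2H))
          exact mixQ _ _ hu2c (Or.inr h1H) (Or.inr h1H)
        exact ⟨h1, h2⟩
  rcases hstep1 with heq | ⟨hl1, hr1⟩
  · exact malcev_propagate heq (nG + 1) (by omega)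
  -- the correspondence from step 1 on
  · set wp : ℕ → Option S := fun k => w (k+1) with hwp
    have hwp_mem : ∀ k c, wp k = some c → c ∈ Subsemigroup.closure ({v, a} : Set S) :=
      fun k c h => hw (k+1) c h
    set lS := (malcev u1 u2 w 1).1 with hlS
    set rS := (malcev u1 u2 w 1).2 with hrS
    set wG : ℕ → Option G := fun k => (wp k).map (fun c => ψ (eps * c * eps)) with hwG
    have corr : ∀ j, (malcev lS rS wp j).1 ∈ HT ∧ (malcev lS rS wp j).2 ∈ HT ∧
        ψ (malcev lS rS wp j).1 = (malcev (ψ lS) (ψ rS) wG j).1 ∧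
        ψ (malcev lS rS wp j).2 = (malcev (ψ lS) (ψ rS) wG j).2 := by
      intro j
      induction j with
      | zero => exact ⟨hl1, hr1, rfl, rfl⟩
      | succ m ih =>
        obtain ⟨ihl, ihr, ihel, iher⟩ := ih
        rw [malcev_succ, malcev_succ]
        cases hwm : wp m with
        | none =>
          have hwGm : wG m = none := by rw [hwG]; simp [hwm]
          rw [hwGm]
          refine ⟨hHmul _ ihl _ ihr, hHmul _ ihr _ ihl, ?_, ?_⟩
          · show ψ (_ * _) = _ * _
            rw [psi_mul _ ihl _ ihr, ihel, iher]
          · show ψ (_ * _) = _ * _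
            rw [psi_mul _ ihr _ ihl, ihel, iher]
        | some c =>
          have hcCL : c ∈ Subsemigroup.closure ({v, a} : Set S) := hwp_mem m c hwm
          have hece : eps * c * eps ∈ HT := sandH c hcCL
          have hkey : ∀ p ∈ HT, ∀ q ∈ HT, p * c * q = p * (eps * c * eps) * q := by
            intro p hp q hq
            have h1 : p * (eps * c * eps) * q = ((p * eps) * c) * (eps * q) := by
              simp only [mul_assoc]
            rw [h1, epsR p hp, epsL q hq]
          have hwGm : wG m = some (ψ (eps * c * eps)) := by rw [hwG]; simp [hwm]
          rw [hwGm]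
          have hl' : mulW (malcev lS rS wp m).1 (some c) (malcev lS rS wp m).2
              = (malcev lS rS wp m).1 * (eps * c * eps) * (malcev lS rS wp m).2 :=
            hkey _ ihl _ ihr
          have hr' : mulW (malcev lS rS wp m).2 (some c) (malcev lS rS wp m).1
              = (malcev lS rS wp m).2 * (eps * c * eps) * (malcev lS rS wp m).1 :=
            hkey _ ihr _ ihl
          rw [hl', hr']
          have hlH : (malcev lS rS wp m).1 * (eps * c * eps) ∈ HT := hHmul _ ihl _ hece
          have hrH : (malcev lS rS wp m).2 * (eps * c * eps) ∈ HT := hHmul _ ihr _ hece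
          refine ⟨hHmul _ hlH _ ihr, hHmul _ hrH _ ihl, ?_, ?_⟩
          · show ψ (_ * _ * _) = _ * _ * _
            rw [psi_mul _ hlH _ ihr, psi_mul _ ihl _ hece, ihel, iher]
          · show ψ (_ * _ * _) = _ * _ * _
            rw [psi_mul _ hrH _ ihl, psi_mul _ ihr _ hece, ihel, iher]
    have hshift := malcev_shift u1 u2 w nG
    obtain ⟨hlH, hrH, hel, her⟩ := corr nG
    have hfin : (malcev lS rS wp nG).1 = (malcev lS rS wp nG).2 := by
      apply psi_injH _ hlH _ hrH
      rw [hel, her]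
      exact hbound (ψ lS) (ψ rS) wG
    have h1 : mulW u1 (w 0) u2 = lS := rfl
    have h2 : mulW u2 (w 0) u1 = rS := rfl
    show (malcev u1 u2 w (nG+1)).1 = (malcev u1 u2 w (nG+1)).2
    rw [hshift, h1, h2]
    exact hfin

end RC
end Batch6
section Batch7
namespace RC

variable {S : Type*} [SemigroupWithZero S] {G I L : Type*} [Group G]
  {P : L → I → Option G} {J : Set S} {φ : S → ReesM0 G I L P}
  [Nonempty I] [Nonempty L]
  (hc : RC P J φ)

include hc
set_option linter.unusedSectionVars false

lemma rfn_of_memJ {v : S} (hv : v ∈ J) {g i l} (hf : φ v = some (g, i, l)) (i₂ : I) :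
    hc.rfn v i₂ = i := by
  have h := hc.mulφ hv (hc.jelt_mem 1 i₂ (Classical.arbitrary L)) hf
    (hc.jelt_phi 1 i₂ (Classical.arbitrary L))
  exact rowth_spec φ h

lemma cfn_of_memJ {v : S} (hv : v ∈ J) {g i l} (hf : φ v = some (g, i, l)) (l₂ : L) :
    hc.cfn v l₂ = l := by
  have h := hc.mulφ (hc.jelt_mem 1 (Classical.arbitrary I) l₂) hv
    (hc.jelt_phi 1 (Classical.arbitrary I) l₂) hf
  exact colth_spec φ h

lemma apow_ne_zero {a : S} (ha : a ∈ LiveSet J) (k : ℕ) : apow a k ≠ 0 := by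
  intro h
  have h1 := (hc.s1 (hc.apow_live ha k) _ hc.jstar_mem hc.jstar_ne).1
  rw [h, zero_mul] at h1
  exact h1 rfl

/-- Master constancy lemma: the row and column action of a live element is constant. -/
lemma fn_const [Finite S] (hPN : IsPN S) {a : S} (ha : a ∈ LiveSet J) :
    (∀ i i', hc.rfn a i = hc.rfn a i') ∧ (∀ l l', hc.cfn a l = hc.cfn a l') := by
  classical
  -- idempotency
  have IDr : ∀ i, hc.rfn a (hc.rfn a i) = hc.rfn a i := by
    intro i
    have h1 : hc.rfn (apow a 1) i = hc.rfn a (hc.rfn a i) := hc.rfn_succ ha 0 i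
    have h2 : hc.rfn (apow a 1) i = hc.rfn a i := hc.rfn_apow_eq hPN ha 1 0 i
    rw [← h1, h2]
  have IDc : ∀ l, hc.cfn a (hc.cfn a l) = hc.cfn a l := by
    intro l
    have h1 : hc.cfn (apow a 1) l = hc.cfn a (hc.cfn a l) := hc.cfn_succ ha 0 l
    have h2 : hc.cfn (apow a 1) l = hc.cfn a l := hc.cfn_apow_eq hPN ha 1 0 l
    rw [← h1, h2]
  by_cases hpow : ∃ k, apow a k ∈ J
  · -- some power lies in J : its row/column force constancy
    obtain ⟨k, hk⟩ := hpow
    obtain ⟨g0, i0, l0, hf0⟩ := hc.dat hk (hc.apow_ne_zero ha k)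
    constructor
    · intro i i'
      have e1 : hc.rfn (apow a k) i = i0 := hc.rfn_of_memJ hk hf0 i
      have e2 : hc.rfn (apow a k) i' = i0 := hc.rfn_of_memJ hk hf0 i'
      have e3 : hc.rfn a i = hc.rfn (apow a k) i := hc.rfn_apow_eq hPN ha 0 k i
      have e4 : hc.rfn a i' = hc.rfn (apow a k) i' := hc.rfn_apow_eq hPN ha 0 k i'
      rw [e3, e4, e1, e2]
    · intro l l'
      have e1 : hc.cfn (apow a k) l = l0 := hc.cfn_of_memJ hk hf0 l
      have e2 : hc.cfn (apow a k) l' = l0 := hc.cfn_of_memJ hk hf0 l'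
      have e3 : hc.cfn a l = hc.cfn (apow a k) l := hc.cfn_apow_eq hPN ha 0 k l
      have e4 : hc.cfn a l' = hc.cfn (apow a k) l' := hc.cfn_apow_eq hPN ha 0 k l'
      rw [e3, e4, e1, e2]
  · -- no power lies in J : use the sandwich lemma
    push_neg at hpow
    set iv : I := hc.rfn a (Classical.arbitrary I) with hiv
    set lv : L := hc.cfn a (Classical.arbitrary L) with hlv
    have hfr : hc.rfn a iv = iv := IDr _
    have hfc : hc.cfn a lv = lv := IDc _
    set v : S := hc.jelt 1 iv lv with hv
    have hsand : SetMN (Subsemigroup.closure ({v, a} : Set S) : Set S) :=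
      hc.sand (hc.Gnil hPN) ha iv lv hfr hfc
        (fun k hkJ => absurd hkJ (hpow k)) (hc.jelt_mem 1 iv lv) (hc.jelt_phi 1 iv lv)
    have hmn : SetMNMod (∅ : Set S) (Subsemigroup.closure ({a, v} : Set S) : Set S) := by
      rw [Set.pair_comm a v]
      exact setMNMod_of_setMN _ hsand
    have hav : a ≠ v := by
      intro h
      have : a ∈ J := h ▸ hc.jelt_mem 1 iv lv
      exact hpow 0 this
    constructor
    · intro i i'
      by_contra hne
      -- one of the two values differs from iv
      have hkey : ∃ i₂, hc.rfn a i₂ ≠ iv := by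
        by_contra hcon
        push_neg at hcon
        exact hne ((hcon i).trans (hcon i').symm)
      obtain ⟨i₂, hi₂⟩ := hkey
      have hrv : hc.rfn v i₂ = iv := hc.rfn_of_memJ (hc.jelt_mem 1 iv lv)
        (hc.jelt_phi 1 iv lv) i₂
      have hlive_v : v ∈ LiveSet J :=
        Or.inr ⟨hc.jelt_mem 1 iv lv, fun h => hc.jelt_ne 1 iv lv h⟩
      exact hc.engRow hPN ha hlive_v hav hmn (by rw [hrv]; exact hi₂)
    · intro l l'
      by_contra hne
      have hkey : ∃ l₂, hc.cfn a l₂ ≠ lv := by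
        by_contra hcon
        push_neg at hcon
        exact hne ((hcon l).trans (hcon l').symm)
      obtain ⟨l₂, hl₂⟩ := hkey
      have hcv : hc.cfn v l₂ = lv := hc.cfn_of_memJ (hc.jelt_mem 1 iv lv)
        (hc.jelt_phi 1 iv lv) l₂
      have hlive_v : v ∈ LiveSet J :=
        Or.inr ⟨hc.jelt_mem 1 iv lv, fun h => hc.jelt_ne 1 iv lv h⟩
      exact hc.engCol hPN ha hlive_v hav hmn (by rw [hcv]; exact hl₂)

end RC
end Batch7
section Batch8
namespace RC

variable {S : Type*} [SemigroupWithZero S] {G I L : Type*} [Group G]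
  {P : L → I → Option G} {J : Set S} {φ : S → ReesM0 G I L P}
  [Nonempty I] [Nonempty L]
  (hc : RC P J φ)

include hc
set_option linter.unusedSectionVars false

noncomputable def Efn (a : S) : I := hc.rfn a (Classical.arbitrary I)
noncomputable def Ffn (a : S) : L := hc.cfn a (Classical.arbitrary L)

lemma Efn_of_memJ {v : S} (hv : v ∈ J) {g i l} (hf : φ v = some (g, i, l)) :
    hc.Efn v = i := hc.rfn_of_memJ hv hf _

lemma Ffn_of_memJ {v : S} (hv : v ∈ J) {g i l} (hf : φ v = some (g, i, l)) :
    hc.Ffn v = l := hc.cfn_of_memJ hv hf _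

lemma actE [Finite S] (hPN : IsPN S) {a : S} (ha : a ∈ LiveSet J) {j : S} (hj : j ∈ J)
    {g i l} (hf : φ j = some (g, i, l)) :
    a * j ∈ J ∧ a * j ≠ 0 ∧ ∃ g', φ (a * j) = some (g', hc.Efn a, l) := by
  obtain ⟨h1, h2, g', hf'⟩ := hc.actL ha hj hf
  refine ⟨h1, h2, g', ?_⟩
  rw [Efn, (hc.fn_const hPN ha).1 (Classical.arbitrary I) i]
  exact hf'

lemma actF [Finite S] (hPN : IsPN S) {a : S} (ha : a ∈ LiveSet J) {j : S} (hj : j ∈ J)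
    {g i l} (hf : φ j = some (g, i, l)) :
    j * a ∈ J ∧ j * a ≠ 0 ∧ ∃ g', φ (j * a) = some (g', i, hc.Ffn a) := by
  obtain ⟨h1, h2, g', hf'⟩ := hc.actR ha hj hf
  refine ⟨h1, h2, g', ?_⟩
  rw [Ffn, (hc.fn_const hPN ha).2 (Classical.arbitrary L) l]
  exact hf'

lemma pow_phi [Finite S] (hPN : IsPN S) {a : S} (ha : a ∈ LiveSet J) (k : ℕ)
    (hk : apow a k ∈ J) : ∃ g, φ (apow a k) = some (g, hc.Efn a, hc.Ffn a) := by
  obtain ⟨g0, i0, l0, hf0⟩ := hc.dat hk (hc.apow_ne_zero ha k)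
  have h1 : hc.Efn a = i0 := by
    have e3 : hc.rfn a (Classical.arbitrary I) = hc.rfn (apow a k) (Classical.arbitrary I) :=
      hc.rfn_apow_eq hPN ha 0 k _
    rw [Efn, e3, hc.rfn_of_memJ hk hf0]
  have h2 : hc.Ffn a = l0 := by
    have e3 : hc.cfn a (Classical.arbitrary L) = hc.cfn (apow a k) (Classical.arbitrary L) :=
      hc.cfn_apow_eq hPN ha 0 k _
    rw [Ffn, e3, hc.cfn_of_memJ hk hf0]
  exact ⟨g0, by rw [h1, h2]; exact hf0⟩

lemma dead_mul {a : S} (hd : a ∉ LiveSet J) : ∀ j ∈ J, a * j = 0 ∧ j * a = 0 := by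
  intro j hj
  by_cases haJ : a ∈ J
  · have ha0 : a = 0 := by
      by_contra h0
      exact hd (Or.inr ⟨haJ, fun hmem => h0 hmem⟩)
    rw [ha0, zero_mul, mul_zero]
    exact ⟨rfl, rfl⟩
  · by_contra hcon
    apply hd
    left
    refine ⟨haJ, j, hj, ?_⟩
    by_contra hcon2
    push_neg at hcon2
    exact hcon ⟨hcon2.1, hcon2.2⟩

lemma dead_absorb {a : S} (hd : a ∉ LiveSet J) (b : S) :
    a * b ∉ LiveSet J ∧ b * a ∉ LiveSet J := by
  constructor
  · intro hlive
    have h1 := (hc.s1 hlive _ hc.jstar_mem hc.jstar_ne).1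
    have h2 : (a * b) * hc.jstar = a * (b * hc.jstar) := mul_assoc a b _
    have h3 : b * hc.jstar ∈ J := hc.mulJl hc.jstar_mem b
    have h4 := (hc.dead_mul hd _ h3).1
    rw [h2, h4] at h1
    exact h1 rfl
  · intro hlive
    have h1 := (hc.s1 hlive _ hc.jstar_mem hc.jstar_ne).2
    have h2 : hc.jstar * (b * a) = (hc.jstar * b) * a := (mul_assoc _ b a).symm
    have h3 : hc.jstar * b ∈ J := hc.mulJr hc.jstar_mem b
    have h4 := (hc.dead_mul hd _ h3).2
    rw [h2, h4] at h1
    exact h1 rfl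

lemma live_mul [Finite S] (hPN : IsPN S) {a b : S} (ha : a ∈ LiveSet J)
    (hb : b ∈ LiveSet J) : a * b ∈ LiveSet J ∧
      hc.Efn (a * b) = hc.Efn a ∧ hc.Ffn (a * b) = hc.Ffn b := by
  have hbj : b * hc.jstar ∈ J := hc.mulJl hc.jstar_mem b
  have hbj0 : b * hc.jstar ≠ 0 := (hc.s1 hb _ hc.jstar_mem hc.jstar_ne).1
  have habj : a * (b * hc.jstar) ≠ 0 := (hc.s1 ha _ hbj hbj0).1
  have hassoc : (a * b) * hc.jstar = a * (b * hc.jstar) := mul_assoc a b _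
  have habj' : (a * b) * hc.jstar ≠ 0 := by rw [hassoc]; exact habj
  have hlive : a * b ∈ LiveSet J := by
    by_cases hJ : a * b ∈ J
    · right
      refine ⟨hJ, fun hmem => ?_⟩
      rw [hmem, zero_mul] at habj'
      exact habj' rfl
    · left
      exact ⟨hJ, hc.jstar, hc.jstar_mem, Or.inl habj'⟩
  refine ⟨hlive, ?_, ?_⟩
  · -- row of the product
    obtain ⟨h1, h2, g1, hf1⟩ := hc.actE hPN hb hc.jstar_mem hc.jstar_phi
    obtain ⟨h1', h2', g2, hf2⟩ := hc.actE hPN ha h1 hf1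
    rw [← hassoc] at hf2
    have h3 : hc.rfn (a * b) (Classical.arbitrary I) = hc.Efn a := by
      rw [rfn]
      exact rowth_spec φ hf2
    rw [Efn, h3]
  · obtain ⟨h1, h2, g1, hf1⟩ := hc.actF hPN ha (hc.jelt_mem 1 (Classical.arbitrary I)
      (Classical.arbitrary L)) (hc.jelt_phi 1 _ _)
    obtain ⟨h1', h2', g2, hf2⟩ := hc.actF hPN hb h1 hf1
    rw [mul_assoc] at hf2
    have h3 : hc.cfn (a * b) (Classical.arbitrary L) = hc.Ffn b := by
      rw [cfn]
      exact colth_spec φ hf2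
    rw [Ffn, h3]

lemma zero_dead : (0 : S) ∉ LiveSet J := by
  rintro (⟨hnJ, -⟩ | ⟨-, h0⟩)
  · exact hnJ hc.h0
  · exact h0 rfl

end RC
end Batch8
section Batch9

lemma rbMul_none_right {I L : Type*} (x : Option (I × L)) : rbMul x none = none := by
  rcases x with _ | ⟨i, l⟩ <;> rfl

lemma rbMul_none_left {I L : Type*} (x : Option (I × L)) : rbMul none x = none := by
  rcases x with _ | ⟨i, l⟩ <;> rfl

end Batch9

/-- Let `S` be a pseudo-nilpotent finite semigroup with zero, and `J` an ideal of
`S` isomorphic (via `φ`) to a regular Rees matrix semigroup `M⁰(G, I, Λ; P)` with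
all entries of `P` non-zero, `J` not Mal'cev nilpotent.  Then there is a surjective
homomorphism `Φ : S → (I × Λ)⁰` with `Φ⁻¹(θ) = F'_J` such that for every
`a ∈ F_J ∪ (J \ {θ})` with `Φ(a) = (e, f)`: `a (J \ {θ}) ⊆ G_{e,*}`,
`(J \ {θ}) a ⊆ G_{*,f}`, `⟨(g; e, f), a⟩` is Mal'cev nilpotent for all `g ∈ G`,
and there is an edge in `N_S` between `a` and every element of
`J \ (G_{e,f} ∪ {θ})`. -/
theorem stmt11 {S : Type*} [SemigroupWithZero S] [Finite S] (hPN : IsPN S)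
    (J : Set S) (hJ : IsIdealIn Set.univ J) (h0 : (0 : S) ∈ J)
    {G I L : Type*} [Group G] [Nonempty I] [Nonempty L]
    (P : L → I → Option G) (hP : ∀ l i, P l i ≠ none)
    (φ : S → ReesM0 G I L P)
    (hom : ∀ a ∈ J, ∀ b ∈ J, φ (a * b) = φ a * φ b)
    (hinj : ∀ a ∈ J, ∀ b ∈ J, φ a = φ b → a = b)
    (hsurj : ∀ z : ReesM0 G I L P, ∃ a ∈ J, φ a = z)
    (hz : φ 0 = (none : Option (G × I × L)))
    (hJnotnil : ¬ SetMN J) :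
    ∃ Φ : S → Option (I × L),
      Function.Surjective Φ ∧
      (∀ a b : S, Φ (a * b) = rbMul (Φ a) (Φ b)) ∧
      (∀ a : S, (Φ a = none ↔ a ∈ Set.univ \ (Fset J ∪ (J \ {0})))) ∧
      (∀ a ∈ Fset J ∪ (J \ {0}), ∀ e : I, ∀ f : L, Φ a = some (e, f) →
        (∀ j ∈ J, j ≠ 0 → ∃ g : G, ∃ μ : L, φ (a * j) = ReesM0.elem g e μ) ∧
        (∀ j ∈ J, j ≠ 0 → ∃ g : G, ∃ i : I, φ (j * a) = ReesM0.elem g i f) ∧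
        (∀ x ∈ J, (∃ g : G, φ x = ReesM0.elem g e f) →
          SetMN (Subsemigroup.closure ({x, a} : Set S) : Set S)) ∧
        (∀ x ∈ J, x ≠ 0 → (∀ g : G, φ x ≠ ReesM0.elem g e f) →
          x ≠ a ∧ ¬ SetMN (Subsemigroup.closure ({a, x} : Set S) : Set S))) := by
  classical
  have hc : RC P J φ := ⟨hJ, h0, hP, hom, hinj, hsurj, hz⟩
  set Φ : S → Option (I × L) := fun s =>
    if s ∈ LiveSet J then some (hc.Efn s, hc.Ffn s) else none with hΦdef
  have hΦlive : ∀ s, s ∈ LiveSet J → Φ s = some (hc.Efn s, hc.Ffn s) := by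
    intro s hs
    rw [hΦdef]
    exact if_pos hs
  have hΦdead : ∀ s, s ∉ LiveSet J → Φ s = none := by
    intro s hs
    rw [hΦdef]
    exact if_neg hs
  refine ⟨Φ, ?_, ?_, ?_, ?_⟩
  · -- Surjectivity
    rintro (_ | ⟨i, l⟩)
    · exact ⟨0, hΦdead 0 hc.zero_dead⟩
    · refine ⟨hc.jelt 1 i l, ?_⟩
      have hlive : hc.jelt 1 i l ∈ LiveSet J :=
        Or.inr ⟨hc.jelt_mem 1 i l, fun h => hc.jelt_ne 1 i l h⟩
      rw [hΦlive _ hlive, hc.Efn_of_memJ (hc.jelt_mem 1 i l) (hc.jelt_phi 1 i l),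
        hc.Ffn_of_memJ (hc.jelt_mem 1 i l) (hc.jelt_phi 1 i l)]
  · -- Homomorphism property
    intro a b
    by_cases ha : a ∈ LiveSet J
    · by_cases hb : b ∈ LiveSet J
      · obtain ⟨hab, he, hf⟩ := hc.live_mul hPN ha hb
        rw [hΦlive _ ha, hΦlive _ hb, hΦlive _ hab, he, hf]
        rfl
      · rw [hΦdead _ hb, hΦdead _ (hc.dead_absorb hb a).2, rbMul_none_right]
    · rw [hΦdead _ ha, hΦdead _ (hc.dead_absorb ha b).1, rbMul_none_left]
  · -- kernel description
    intro a
    by_cases ha : a ∈ LiveSet J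
    · rw [hΦlive _ ha]
      constructor
      · intro h
        exact absurd h (by simp)
      · intro h
        exact absurd ha h.2
    · rw [hΦdead _ ha]
      exact ⟨fun _ => ⟨trivial, ha⟩, fun _ => rfl⟩
  · -- main properties
    intro a ha e f hfa
    have haL : a ∈ LiveSet J := ha
    rw [hΦlive _ haL] at hfa
    have hpair := Option.some.inj hfa
    have he : hc.Efn a = e := congrArg Prod.fst hpair
    have hf : hc.Ffn a = f := congrArg Prod.snd hpair
    refine ⟨?_, ?_, ?_, ?_⟩
    · intro j hj hj0
      obtain ⟨gj, ij, lj, hfj⟩ := hc.dat hj hj0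
      obtain ⟨h1, h2, g', hf'⟩ := hc.actE hPN haL hj hfj
      refine ⟨g', lj, ?_⟩
      rw [← he]
      exact hf'
    · intro j hj hj0
      obtain ⟨gj, ij, lj, hfj⟩ := hc.dat hj hj0
      obtain ⟨h1, h2, g', hf'⟩ := hc.actF hPN haL hj hfj
      refine ⟨g', ij, ?_⟩
      rw [← hf]
      exact hf'
    · intro x hx hex
      obtain ⟨g, hgx⟩ := hex
      have hgx' : φ x = some (g, e, f) := hgx
      have hfr : hc.rfn a e = e := by
        have h1 : hc.rfn a e = hc.rfn a (Classical.arbitrary I) :=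
          (hc.fn_const hPN haL).1 e (Classical.arbitrary I)
        rw [h1]
        exact he
      have hfc : hc.cfn a f = f := by
        have h1 : hc.cfn a f = hc.cfn a (Classical.arbitrary L) :=
          (hc.fn_const hPN haL).2 f (Classical.arbitrary L)
        rw [h1]
        exact hf
      have hpows : ∀ k, apow a k ∈ J → ∃ g, φ (apow a k) = some (g, e, f) := by
        intro k hk
        obtain ⟨g0, hg0⟩ := hc.pow_phi hPN haL k hk
        exact ⟨g0, by rw [← he, ← hf]; exact hg0⟩
      exact hc.sand (hc.Gnil hPN) haL e f hfr hfc hpows hx hgx'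
    · intro x hx hx0 hnotH
      obtain ⟨gx, ix, lx, hfx⟩ := hc.dat hx hx0
      have hne_pair : ix ≠ e ∨ lx ≠ f := by
        by_contra hcon
        push_neg at hcon
        apply hnotH gx
        rw [hfx, hcon.1, hcon.2]
        rfl
      have hxa : x ≠ a := by
        intro hxaeq
        have haJ : a ∈ J := hxaeq ▸ hx
        have hfa' : φ a = some (gx, ix, lx) := hxaeq ▸ hfx
        have h1 : hc.Efn a = ix := hc.Efn_of_memJ haJ hfa'
        have h2 : hc.Ffn a = lx := hc.Ffn_of_memJ haJ hfa'
        rcases hne_pair with h | h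
        · exact h (h1.symm.trans he)
        · exact h (h2.symm.trans hf)
      refine ⟨hxa, ?_⟩
      rintro ⟨n, hn, hall⟩
      have hxcl : x ∈ (Subsemigroup.closure ({a, x} : Set S) : Set S) :=
        Subsemigroup.subset_closure (Or.inr rfl)
      have hacl : a ∈ (Subsemigroup.closure ({a, x} : Set S) : Set S) :=
        Subsemigroup.subset_closure (Or.inl rfl)
      rcases hne_pair with hrow | hcol
      · -- row mismatch
        set w : ℕ → Option S := fun _ => some x with hwdef
        have hwmem : ∀ k c, w k = some c →
            c ∈ (Subsemigroup.closure ({a, x} : Set S) : Set S) := by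
          intro k c h
          have : c = x := (Option.some.inj h).symm
          rw [this]
          exact hxcl
        obtain ⟨haxJ, hax0, g', hfax⟩ := hc.actE hPN haL hx hfx
        have hfax' : φ (a * x) = some (g', e, lx) := by rw [← he]; exact hfax
        have inv : ∀ m, (malcev x (a * x) w m).1 ∈ J ∧ (malcev x (a * x) w m).2 ∈ J ∧
            ∃ g1 l1 g2 l2, φ (malcev x (a * x) w m).1 = some (g1, ix, l1) ∧
              φ (malcev x (a * x) w m).2 = some (g2, e, l2) := by
          intro m
          induction m with
          | zero => exact ⟨hx, haxJ, gx, lx, g', lx, hfx, hfax'⟩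
          | succ k ih =>
            obtain ⟨hJ1, hJ2, g1, l1, g2, l2, hg1, hg2⟩ := ih
            rw [malcev_succ]
            have hwk : w k = some x := rfl
            rw [hwk]
            have e1 := hc.mulφ hJ1 hx hg1 hfx
            have e2 := hc.mulφ (hc.mulJr hJ1 x) hJ2 e1 hg2
            have e3 := hc.mulφ hJ2 hx hg2 hfx
            have e4 := hc.mulφ (hc.mulJr hJ2 x) hJ1 e3 hg1
            exact ⟨hc.mulJr (hc.mulJr hJ1 x) _, hc.mulJr (hc.mulJr hJ2 x) _,
              _, _, _, _, e2, e4⟩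
        obtain ⟨hJ1, hJ2, g1, l1, g2, l2, hg1, hg2⟩ := inv n
        have heq := hall x hxcl (a * x) (Subsemigroup.mul_mem _
          (Subsemigroup.subset_closure (Or.inl rfl)) (Subsemigroup.subset_closure (Or.inr rfl)))
          w hwmem
        rw [heq, hg2] at hg1
        exact hrow (congrArg (fun q : G × I × L => q.2.1) (Option.some.inj hg1)).symm
      · -- column mismatch
        set w : ℕ → Option S := fun _ => some x with hwdef
        have hwmem : ∀ k c, w k = some c →
            c ∈ (Subsemigroup.closure ({a, x} : Set S) : Set S) := by
          intro k c h
          have : c = x := (Option.some.inj h).symm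
          rw [this]
          exact hxcl
        obtain ⟨hxaJ, hxa0, g', hfxa⟩ := hc.actF hPN haL hx hfx
        have hfxa' : φ (x * a) = some (g', ix, f) := by rw [← hf]; exact hfxa
        have inv : ∀ m, (malcev x (x * a) w m).1 ∈ J ∧ (malcev x (x * a) w m).2 ∈ J ∧
            ∃ g1 i1 c1 g2 i2 c2, c1 ≠ c2 ∧ φ (malcev x (x * a) w m).1 = some (g1, i1, c1) ∧
              φ (malcev x (x * a) w m).2 = some (g2, i2, c2) := by
          intro m
          induction m with
          | zero => exact ⟨hx, hxaJ, gx, ix, lx, g', ix, f, hcol, hfx, hfxa'⟩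
          | succ k ih =>
            obtain ⟨hJ1, hJ2, g1, i1, c1, g2, i2, c2, hc12, hg1, hg2⟩ := ih
            rw [malcev_succ]
            have hwk : w k = some x := rfl
            rw [hwk]
            have e1 := hc.mulφ hJ1 hx hg1 hfx
            have e2 := hc.mulφ (hc.mulJr hJ1 x) hJ2 e1 hg2
            have e3 := hc.mulφ hJ2 hx hg2 hfx
            have e4 := hc.mulφ (hc.mulJr hJ2 x) hJ1 e3 hg1
            exact ⟨hc.mulJr (hc.mulJr hJ1 x) _, hc.mulJr (hc.mulJr hJ2 x) _,
              _, _, c2, _, _, c1, hc12.symm, e2, e4⟩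
        obtain ⟨hJ1, hJ2, g1, i1, c1, g2, i2, c2, hc12, hg1, hg2⟩ := inv n
        have heq := hall x hxcl (x * a) (Subsemigroup.mul_mem _
          (Subsemigroup.subset_closure (Or.inr rfl)) (Subsemigroup.subset_closure (Or.inl rfl)))
          w hwmem
        rw [heq, hg2] at hg1
        exact hc12 (congrArg (fun q : G × I × L => q.2.2) (Option.some.inj hg1)).symm
end

section
/- Let S be a pseudo-nilpotent finite semigroup, J an ideal of S with J a regular, non-nilpotent Rees matrix semigroup M^0(G, I, Λ; P), and let Φ: S → (I × Λ)^0 be the pseudo-nilpotent homomorphism. If a, b ∈ F_J ∪ (J \ {θ}) and Φ(a) ≠ Φ(b), then there is an edge in N_S between a and b, i.e., ⟨a, b⟩ is not Mal'cev nilpotent. -/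
/-- Let `S` be a pseudo-nilpotent finite semigroup with zero, `J` an ideal of `S`
isomorphic (via `φ`) to a regular non-nilpotent Rees matrix semigroup
`M⁰(G, I, Λ; P)` with all entries of `P` non-zero, and `Φ : S → (I × Λ)⁰` the
pseudo-nilpotent homomorphism.  If `a, b ∈ F_J ∪ (J \ {θ})` and `Φ(a) ≠ Φ(b)`,
then there is an edge of `N_S` between `a` and `b`, i.e. `⟨a, b⟩` is not
Mal'cev nilpotent. -/
theorem stmt12 {S : Type*} [SemigroupWithZero S] [Finite S] (hPN : IsPN S)
    (J : Set S) (hJ : IsIdealIn Set.univ J) (h0 : (0 : S) ∈ J)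
    {G I L : Type*} [Group G] [Nonempty I] [Nonempty L]
    (P : L → I → Option G) (hP : ∀ l i, P l i ≠ none)
    (φ : S → ReesM0 G I L P)
    (hom : ∀ a ∈ J, ∀ b ∈ J, φ (a * b) = φ a * φ b)
    (hinj : ∀ a ∈ J, ∀ b ∈ J, φ a = φ b → a = b)
    (hsurj : ∀ z : ReesM0 G I L P, ∃ a ∈ J, φ a = z)
    (hz : φ 0 = (none : Option (G × I × L)))
    (hJnotnil : ¬ SetMN J)
    (Φ : S → Option (I × L))
    (hΦhom : ∀ a b : S, Φ (a * b) = rbMul (Φ a) (Φ b))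
    (hΦzero : ∀ a : S, (Φ a = none ↔ a ∈ Set.univ \ (Fset J ∪ (J \ {0}))))
    (hΦspec : ∀ a : S, ∀ e : I, ∀ f : L, Φ a = some (e, f) →
      (∀ j ∈ J, j ≠ 0 → ∃ g : G, ∃ μ : L, φ (a * j) = ReesM0.elem g e μ) ∧
      (∀ j ∈ J, j ≠ 0 → ∃ g : G, ∃ i : I, φ (j * a) = ReesM0.elem g i f)) :
    ∀ a ∈ Fset J ∪ (J \ {0}), ∀ b ∈ Fset J ∪ (J \ {0}), Φ a ≠ Φ b →
      a ≠ b ∧ ¬ SetMN (Subsemigroup.closure ({a, b} : Set S) : Set S) := by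
  intro a ha b hb hab
  have hΦa : Φ a ≠ none := by
    intro h; exact ((hΦzero a).1 h).2 ha
  have hΦb : Φ b ≠ none := by
    intro h; exact ((hΦzero b).1 h).2 hb
  obtain ⟨⟨e1, f1⟩, hA⟩ := Option.ne_none_iff_exists'.mp hΦa
  obtain ⟨⟨e2, f2⟩, hB⟩ := Option.ne_none_iff_exists'.mp hΦb
  refine ⟨fun h => hab (by rw [h]), ?_⟩
  rintro ⟨n, hn, hsp⟩
  have haA : a ∈ (Subsemigroup.closure ({a, b} : Set S) : Set S) :=
    Subsemigroup.subset_closure (by simp)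
  have hbA : b ∈ (Subsemigroup.closure ({a, b} : Set S) : Set S) :=
    Subsemigroup.subset_closure (by simp)
  set w : ℕ → Option S := fun _ => some a with hw
  have key : ∀ m, Φ (malcev a b w m).1 = some (e1, if Even m then f1 else f2) ∧
      Φ (malcev a b w m).2 = some (e2, if Even m then f2 else f1) := by
    intro m
    induction m with
    | zero => simpa [malcev] using ⟨hA, hB⟩
    | succ k ih =>
      obtain ⟨ih1, ih2⟩ := ih
      have hLam : (malcev a b w (k + 1)).1 = (malcev a b w k).1 * a * (malcev a b w k).2 := rfl
      have hRho : (malcev a b w (k + 1)).2 = (malcev a b w k).2 * a * (malcev a b w k).1 := rfl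
      constructor
      · rw [hLam, hΦhom, hΦhom, ih1, ih2, hA]
        by_cases hk : Even k <;> simp [rbMul, hk, Nat.even_add_one]
      · rw [hRho, hΦhom, hΦhom, ih2, ih1, hA]
        by_cases hk : Even k <;> simp [rbMul, hk, Nat.even_add_one]
  have heq := hsp a haA b hbA w (fun k c hc => by
    rw [hw] at hc; injection hc with h; rw [← h]; exact haA)
  obtain ⟨h1, h2⟩ := key n
  rw [heq, h2] at h1
  injection h1 with h1
  obtain ⟨he, hf⟩ := Prod.mk.injEq .. ▸ h1
  have hne : (e1, f1) ≠ (e2, f2) := by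
    intro h; exact hab (by rw [hA, hB, h])
  have hf12 : f1 ≠ f2 := by
    intro h; exact hne (by rw [he.symm, h])
  rcases Nat.even_or_odd n with hpar | hpar
  · simp [hpar] at hf; exact hf12 hf.symm
  · simp [Nat.not_even_iff_odd.mpr hpar] at hf; exact hf12 hf
end

section
/- Let S be a pseudo-nilpotent finite semigroup and a, b ∈ S. If there is an edge in the upper non-nilpotent graph N_S between a and b (i.e., ⟨a, b⟩ is not Mal'cev nilpotent), then there exists a stem S^{(i)} of S containing both a and b. -/
/-- A principal series `S = S_1 ⊃ S_2 ⊃ ⋯ ⊃ S_m ⊃ S_{m+1} = ∅` of a semigroup: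
a strictly decreasing chain of ideals with no ideal strictly between consecutive
terms (the empty set counts as an ideal). -/
structure PrincipalSeries (S : Type*) [Semigroup S] where
  m : ℕ
  C : ℕ → Set S
  first : C 1 = Set.univ
  last : C (m + 1) = ∅
  ideal : ∀ i, 1 ≤ i → i ≤ m → IsIdealIn Set.univ (C i)
  ssub : ∀ i, 1 ≤ i → i ≤ m → C (i + 1) ⊂ C i
  maximal : ∀ i, 1 ≤ i → i ≤ m → ∀ I : Set S, IsIdealIn Set.univ I →
    C (i + 1) ⊆ I → I ⊆ C i → I = C (i + 1) ∨ I = C i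

variable {S : Type*} [Semigroup S]

/-- `F_{S_j/S_{j+1}}(S/S_{j+1})`, computed in `S`:  the elements `s ∉ S_j` with
`s·a ≠ θ` or `a·s ≠ θ` in `S/S_{j+1}` for some `a` in the ideal `S_j/S_{j+1}`. -/
def FsetQ (ps : PrincipalSeries S) (j : ℕ) : Set S :=
  {s | s ∉ ps.C j ∧ ∃ a ∈ ps.C j, s * a ∉ ps.C (j + 1) ∨ a * s ∉ ps.C (j + 1)}

/-- `S_i \ S_{i+1}` is a root: the principal factor `S_i/S_{i+1}` is not Mal'cev
nilpotent and there is no `N_S`-edge between `S_i \ S_{i+1}` and `S_{i+1}`. -/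
def Root (ps : PrincipalSeries S) (i : ℕ) : Prop :=
  ¬ SetMNMod (ps.C (i + 1)) (ps.C i) ∧
  ∀ a ∈ ps.C i \ ps.C (i + 1), ∀ b ∈ ps.C (i + 1), ¬ NEdge a b

/-- `S_i \ S_{i+1}` is an isolated subset: it is not a root, and whenever
`S_i \ S_{i+1} ⊆ F_{S_j/S_{j+1}}(S/S_{j+1})` the factor `S_j/S_{j+1}` is nilpotent. -/
def Isolated (ps : PrincipalSeries S) (i : ℕ) : Prop :=
  ¬ Root ps i ∧
  ∀ j, 1 ≤ j → j ≤ ps.m → ps.C i \ ps.C (i + 1) ⊆ FsetQ ps j →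
    SetMNMod (ps.C (j + 1)) (ps.C j)

/-- `K`, the union of all isolated subsets `S_i \ S_{i+1}`. -/
def Kset (ps : PrincipalSeries S) : Set S :=
  {a | ∃ i, 1 ≤ i ∧ i ≤ ps.m ∧ Isolated ps i ∧ a ∈ ps.C i \ ps.C (i + 1)}

/-- The stem `S^{(i)} = F_{S_i/S_{i+1}}(S/S_{i+1}) ∪ (S_i \ S_{i+1})` of a root. -/
def Stem (ps : PrincipalSeries S) (i : ℕ) : Set S :=
  FsetQ ps i ∪ (ps.C i \ ps.C (i + 1))

section Development

variable {S : Type*} [Semigroup S]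

/-! ### Optional-element product helpers -/

def oMul : Option S → S → S
  | none, x => x
  | some c, x => c * x

def muO : S → Option S → S
  | x, none => x
  | x, some c => x * c

def oo : Option S → Option S → Option S
  | none, q => q
  | some c, none => some c
  | some c, some d => some (c * d)

lemma mulW_eq_left (a : S) (w : Option S) (b : S) : mulW a w b = a * oMul w b := by
  cases w <;> simp [mulW, oMul, mul_assoc]

lemma mulW_eq_right (a : S) (w : Option S) (b : S) : mulW a w b = muO a w * b := by
  cases w <;> simp [mulW, muO]

/-! ### Occurrence (being a factor of a product) -/

def emb (u : Option S) (x : S) (v : Option S) : S := muO (oMul u x) v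

def occ (x s : S) : Prop := ∃ u v : Option S, s = emb u x v

lemma occ_self (x : S) : occ x x := ⟨none, none, rfl⟩

lemma occ_mul_right {x s : S} (h : occ x s) (t : S) : occ x (s * t) := by
  obtain ⟨u, v, rfl⟩ := h
  exact ⟨u, some (oMul v t), by cases u <;> cases v <;> simp [emb, muO, oMul, mul_assoc]⟩

lemma occ_mul_left {x s : S} (h : occ x s) (t : S) : occ x (t * s) := by
  obtain ⟨u, v, rfl⟩ := h
  exact ⟨some (muO t u), v, by cases u <;> cases v <;> simp [emb, muO, oMul, mul_assoc]⟩

lemma occ_oMul {x s : S} (h : occ x s) (u : Option S) : occ x (oMul u s) := by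
  cases u with
  | none => exact h
  | some c => exact occ_mul_left h c

lemma occ_muO {x s : S} (h : occ x s) (v : Option S) : occ x (muO s v) := by
  cases v with
  | none => exact h
  | some c => exact occ_mul_right h c

lemma occ_trans {x s t : S} (h1 : occ x s) (h2 : occ s t) : occ x t := by
  obtain ⟨u, v, rfl⟩ := h2
  exact occ_muO (occ_oMul h1 u) v

lemma occ_mulW_left (a : S) (w : Option S) (b : S) : occ a (mulW a w b) :=
  ⟨none, some (oMul w b), by rw [mulW_eq_left]; rfl⟩

lemma occ_mulW_right (a : S) (w : Option S) (b : S) : occ b (mulW a w b) :=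
  ⟨some (muO a w), none, by rw [mulW_eq_right]; rfl⟩

/-! ### Absorbing sets -/

def ABS (D : Set S) : Prop := ∀ s ∈ D, ∀ t : S, t * s ∈ D ∧ s * t ∈ D

lemma abs_oMul {D : Set S} (hD : ABS D) {s : S} (hs : s ∈ D) (u : Option S) :
    oMul u s ∈ D := by
  cases u with
  | none => exact hs
  | some c => exact (hD s hs c).1

lemma abs_muO {D : Set S} (hD : ABS D) {s : S} (hs : s ∈ D) (v : Option S) :
    muO s v ∈ D := by
  cases v with
  | none => exact hs
  | some c => exact (hD s hs c).2

lemma abs_occ {D : Set S} (hD : ABS D) {x s : S} (hx : x ∈ D) (h : occ x s) : s ∈ D := by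
  obtain ⟨u, v, rfl⟩ := h
  exact abs_muO hD (abs_oMul hD hx u) v

lemma abs_mulW {D : Set S} (hD : ABS D) {a b : S} (w : Option S)
    (h : a ∈ D ∨ b ∈ D) : mulW a w b ∈ D := by
  rcases h with h | h
  · rw [mulW_eq_left]; exact (hD a h _).2
  · rw [mulW_eq_right]; exact (hD b h _).1

/-! ### malcev basics -/

lemma malcev_zero_1 (x y : S) (w : ℕ → Option S) : (malcev x y w 0).1 = x := rfl
lemma malcev_zero_2 (x y : S) (w : ℕ → Option S) : (malcev x y w 0).2 = y := rfl

lemma malcev_succ_1 (x y : S) (w : ℕ → Option S) (n : ℕ) :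
    (malcev x y w (n+1)).1 = mulW (malcev x y w n).1 (w n) (malcev x y w n).2 := rfl

lemma malcev_succ_2 (x y : S) (w : ℕ → Option S) (n : ℕ) :
    (malcev x y w (n+1)).2 = mulW (malcev x y w n).2 (w n) (malcev x y w n).1 := rfl

lemma malcev_collapse {x y : S} {w : ℕ → Option S} {n : ℕ}
    (h : (malcev x y w n).1 = (malcev x y w n).2) :
    ∀ k, n ≤ k → (malcev x y w k).1 = (malcev x y w k).2 := by
  intro k hk
  induction k, hk using Nat.le_induction with
  | base => exact h
  | succ k hk ih => rw [malcev_succ_1, malcev_succ_2, ih]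

lemma malcev_ne {x y : S} {w : ℕ → Option S} {N n : ℕ}
    (h : (malcev x y w N).1 ≠ (malcev x y w N).2) (hn : n ≤ N) :
    (malcev x y w n).1 ≠ (malcev x y w n).2 :=
  fun he => h (malcev_collapse he N hn)

lemma malcev_absorb {D : Set S} (hD : ABS D) {x y : S} {w : ℕ → Option S} {n : ℕ}
    (h : (malcev x y w n).1 ∈ D ∨ (malcev x y w n).2 ∈ D) :
    ∀ k, n < k → (malcev x y w k).1 ∈ D ∧ (malcev x y w k).2 ∈ D := by
  intro k hk
  induction k with
  | zero => omega
  | succ k ih =>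
    rcases (Nat.lt_succ_iff.mp hk).lt_or_eq with hk' | rfl
    · obtain ⟨h1, h2⟩ := ih hk'
      rw [malcev_succ_1, malcev_succ_2]
      exact ⟨abs_mulW hD _ (Or.inl h1), abs_mulW hD _ (Or.inl h2)⟩
    · rw [malcev_succ_1, malcev_succ_2]
      exact ⟨abs_mulW hD _ h, abs_mulW hD _ h.symm⟩

lemma malcev_occ {x y : S} {w : ℕ → Option S} :
    ∀ n, 1 ≤ n →
      (occ x (malcev x y w n).1 ∧ occ y (malcev x y w n).1) ∧
      (occ x (malcev x y w n).2 ∧ occ y (malcev x y w n).2) := by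
  intro n hn
  induction n with
  | zero => omega
  | succ n ih =>
    rcases Nat.eq_zero_or_pos n with rfl | hpos
    · rw [malcev_succ_1, malcev_succ_2, malcev_zero_1, malcev_zero_2]
      exact ⟨⟨occ_mulW_left x (w 0) y, occ_mulW_right x (w 0) y⟩,
             ⟨occ_mulW_right y (w 0) x, occ_mulW_left y (w 0) x⟩⟩
    · obtain ⟨⟨hxl, hyl⟩, ⟨hxr, hyr⟩⟩ := ih hpos
      rw [malcev_succ_1, malcev_succ_2]
      exact ⟨⟨occ_trans hxl (occ_mulW_left _ _ _), occ_trans hyl (occ_mulW_left _ _ _)⟩,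
             ⟨occ_trans hxr (occ_mulW_left _ _ _), occ_trans hyr (occ_mulW_left _ _ _)⟩⟩

lemma malcev_mem {K : Subsemigroup S} {x y : S} {w : ℕ → Option S} (hx : x ∈ K)
    (hy : y ∈ K) {M : ℕ} (hw : ∀ k, k < M → ∀ c, w k = some c → c ∈ K) :
    ∀ n ≤ M, (malcev x y w n).1 ∈ K ∧ (malcev x y w n).2 ∈ K := by
  intro n
  induction n with
  | zero => exact fun _ => ⟨hx, hy⟩
  | succ n ih =>
    intro h
    obtain ⟨h1, h2⟩ := ih (by omega)
    have key : ∀ a b : S, a ∈ K → b ∈ K → mulW a (w n) b ∈ K := by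
      intro a b ha hb
      cases hw' : w n with
      | none => exact mul_mem ha hb
      | some c =>
        have hc := hw n (by omega) c hw'
        exact mul_mem (mul_mem ha hc) hb
    rw [malcev_succ_1, malcev_succ_2]
    exact ⟨key _ _ h1 h2, key _ _ h2 h1⟩

/-! ### Commutativity helpers -/

def commWith (x : S) : Subsemigroup S where
  carrier := {t | x * t = t * x}
  mul_mem' := by
    intro a b ha hb
    simp only [Set.mem_setOf_eq] at *
    rw [← mul_assoc, ha, mul_assoc, hb, ← mul_assoc]

lemma comm_of_mem_closure_singleton {g s t : S}
    (hs : s ∈ Subsemigroup.closure ({g} : Set S))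
    (ht : t ∈ Subsemigroup.closure ({g} : Set S)) : s * t = t * s := by
  have h1 : Subsemigroup.closure ({g} : Set S) ≤ commWith g :=
    Subsemigroup.closure_le.2 (by rintro r rfl; rfl)
  have hsg : g * s = s * g := h1 hs
  have h2 : Subsemigroup.closure ({g} : Set S) ≤ commWith s :=
    Subsemigroup.closure_le.2 (by rintro r rfl; exact hsg.symm)
  exact h2 ht

lemma closure_pair_le {p q : S} {K : Subsemigroup S} (hp : p ∈ K) (hq : q ∈ K) :
    (Subsemigroup.closure ({p, q} : Set S) : Set S) ⊆ (K : Set S) := by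
  intro s hs
  exact (Subsemigroup.closure_le.2 (by rintro r (rfl | rfl) <;> assumption)) hs

def decSub (p q : S) : Subsemigroup S where
  carrier := {s | s ∈ Subsemigroup.closure ({p} : Set S) ∨ occ q s}
  mul_mem' := by
    rintro a b (ha | ha) (hb | hb)
    · exact Or.inl (mul_mem ha hb)
    · exact Or.inr (occ_mul_left hb a)
    · exact Or.inr (occ_mul_right ha b)
    · exact Or.inr (occ_mul_right ha b)

lemma mem_closure_pair_cases {p q s : S}
    (hs : s ∈ Subsemigroup.closure ({p, q} : Set S)) :
    s ∈ Subsemigroup.closure ({p} : Set S) ∨ occ q s := by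
  have h : Subsemigroup.closure ({p, q} : Set S) ≤ decSub p q := by
    apply Subsemigroup.closure_le.2
    rintro r (rfl | rfl)
    · exact Or.inl (Subsemigroup.subset_closure rfl)
    · exact Or.inr (occ_self r)
  exact h hs

lemma setMNMod_of_comm_s16 {I : Set S} {x y : S}
    (hcomm : ∀ s ∈ Subsemigroup.closure ({x, y} : Set S),
      ∀ t ∈ Subsemigroup.closure ({x, y} : Set S), s * t = t * s) :
    SetMNMod I (Subsemigroup.closure ({x, y} : Set S) : Set S) := by
  refine ⟨1, Nat.one_pos, ?_⟩
  intro a ha b hb w hw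
  left
  rw [malcev_succ_1, malcev_succ_2, malcev_zero_1, malcev_zero_2]
  cases hw0 : w 0 with
  | none => exact hcomm a ha b hb
  | some c =>
    have hc : c ∈ Subsemigroup.closure ({x, y} : Set S) := hw 0 c hw0
    show a * c * b = b * c * a
    rw [hcomm a ha c hc, mul_assoc, hcomm a ha b hb, ← mul_assoc, hcomm c hc b hb]

lemma setMNMod_of_pair_in_singleton {I : Set S} {g x y : S}
    (hx : x ∈ Subsemigroup.closure ({g} : Set S))
    (hy : y ∈ Subsemigroup.closure ({g} : Set S)) :
    SetMNMod I (Subsemigroup.closure ({x, y} : Set S) : Set S) := by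
  apply setMNMod_of_comm_s16
  have hsub : (Subsemigroup.closure ({x, y} : Set S) : Set S) ⊆
      (Subsemigroup.closure ({g} : Set S) : Set S) := closure_pair_le hx hy
  exact fun s hs t ht => comm_of_mem_closure_singleton (hsub hs) (hsub ht)

end Development
section Development2

variable {S : Type*} [Semigroup S]

lemma mpos [Nonempty S] (ps : PrincipalSeries S) : 1 ≤ ps.m := by
  by_contra h
  have h0 : ps.m = 0 := by omega
  have hlast := ps.last
  rw [h0] at hlast
  rw [ps.first] at hlast
  exact Set.univ_nonempty.ne_empty hlast

lemma absC (ps : PrincipalSeries S) : ∀ j, 1 ≤ j → j ≤ ps.m + 1 → ABS (ps.C j) := by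
  intro j h1 h2
  rcases eq_or_lt_of_le h2 with he | hl
  · intro s hs
    rw [he, ps.last] at hs
    exact absurd hs (Set.notMem_empty s)
  · have hj : j ≤ ps.m := by omega
    intro s hs t
    exact (ps.ideal j h1 hj).2 s hs t (Set.mem_univ t)

lemma monoC (ps : PrincipalSeries S) :
    ∀ j k, 1 ≤ j → j ≤ k → k ≤ ps.m + 1 → ps.C k ⊆ ps.C j := by
  intro j k h1 hjk
  induction k, hjk using Nat.le_induction with
  | base => exact fun _ => subset_rfl
  | succ k hk' ih =>
    intro hk s hs
    exact ih (by omega) ((ps.ssub k (by omega) (by omega)).subset hs)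

noncomputable def lvl (ps : PrincipalSeries S) (s : S) : ℕ :=
  @Nat.findGreatest (fun j => s ∈ ps.C j) (Classical.decPred _) ps.m

lemma lvl_ge_one [Nonempty S] (ps : PrincipalSeries S) (s : S) : 1 ≤ lvl ps s := by
  unfold lvl
  exact @Nat.le_findGreatest 1 (fun j => s ∈ ps.C j) (Classical.decPred _) ps.m
    (mpos ps) (by show s ∈ ps.C 1; rw [ps.first]; trivial)

lemma lvl_le (ps : PrincipalSeries S) (s : S) : lvl ps s ≤ ps.m := by
  unfold lvl
  exact @Nat.findGreatest_le (fun j => s ∈ ps.C j) (Classical.decPred _) ps.m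

lemma mem_lvl [Nonempty S] (ps : PrincipalSeries S) (s : S) : s ∈ ps.C (lvl ps s) := by
  have h := @Nat.findGreatest_spec 1 (fun j => s ∈ ps.C j) (Classical.decPred _) ps.m
    (mpos ps) (by show s ∈ ps.C 1; rw [ps.first]; trivial)
  exact h

lemma notMem_lvl_succ [Nonempty S] (ps : PrincipalSeries S) (s : S) :
    s ∉ ps.C (lvl ps s + 1) := by
  rcases eq_or_lt_of_le (lvl_le ps s) with he | hl
  · rw [he, ps.last]
    exact Set.notMem_empty s
  · have h := @Nat.findGreatest_is_greatest (lvl ps s + 1) (fun j => s ∈ ps.C j)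
      (Classical.decPred _) ps.m (by unfold lvl; exact Nat.lt_succ_self _) (by omega)
    exact h

def CSub (ps : PrincipalSeries S) (j : ℕ) (h1 : 1 ≤ j) (h2 : j ≤ ps.m + 1) :
    Subsemigroup S where
  carrier := ps.C j
  mul_mem' := by
    intro a b ha hb
    exact (absC ps j h1 h2 b hb a).1

/-- Any two elements of the same layer `C i \ C (i+1)` occur in each other
(the layer is `0`-simple). -/
lemma occ_of_same_level [Nonempty S] (ps : PrincipalSeries S) {i : ℕ}
    (h1 : 1 ≤ i) (h2 : i ≤ ps.m) {s x : S}
    (hs : s ∈ ps.C i) (hs1 : s ∉ ps.C (i + 1))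
    (hx : x ∈ ps.C i) (hx1 : x ∉ ps.C (i + 1)) : occ s x := by
  set J : Set S := ps.C (i + 1) ∪ {y | occ s y} with hJ
  have hJideal : IsIdealIn (Set.univ : Set S) J := by
    constructor
    · exact Set.subset_univ _
    · intro a ha t _
      rcases ha with ha | ha
      · exact ⟨Or.inl (absC ps (i + 1) (by omega) (by omega) a ha t).1,
               Or.inl (absC ps (i + 1) (by omega) (by omega) a ha t).2⟩
      · exact ⟨Or.inr (occ_mul_left ha t), Or.inr (occ_mul_right ha t)⟩
  have hJsub : J ⊆ ps.C i := by
    rintro a (ha | ha)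
    · exact monoC ps i (i + 1) h1 (by omega) (by omega) ha
    · exact abs_occ (absC ps i h1 (by omega)) hs ha
  rcases ps.maximal i h1 h2 J hJideal Set.subset_union_left hJsub with h | h
  · exfalso
    have hmem : s ∈ J := Or.inr (occ_self s)
    rw [h] at hmem
    exact hs1 hmem
  · have hmem : x ∈ J := by rw [h]; exact hx
    rcases hmem with h' | h'
    · exact absurd h' hx1
    · exact h'

/-- transporting non-nullity through occurrences -/
lemma nn_transport {α β g : S} {z : Option S} (hα : occ g α) (hβ : occ g β) :
    ∃ Z : Option S, occ (mulW g Z g) (mulW α z β) := by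
  obtain ⟨u, v, rfl⟩ := hα
  obtain ⟨u', v', rfl⟩ := hβ
  refine ⟨oo v (oo z u'), u, v', ?_⟩
  cases u <;> cases v <;> cases u' <;> cases v' <;> cases z <;>
    simp [mulW, emb, muO, oMul, oo, mul_assoc]

lemma fset_of_occ [Nonempty S] (ps : PrincipalSeries S) {l : ℕ}
    (h1 : 1 ≤ l) (h2 : l ≤ ps.m) {a g : S} (ha : a ∉ ps.C l) (hg : g ∈ ps.C l)
    (hocc : occ a g) {Z : Option S} (hnn : mulW g Z g ∉ ps.C (l + 1)) :
    a ∈ FsetQ ps l := by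
  have habs : ABS (ps.C l) := absC ps l h1 (by omega)
  have habs1 : ABS (ps.C (l + 1)) := absC ps (l + 1) (by omega) (by omega)
  obtain ⟨u, v, rfl⟩ := hocc
  refine ⟨ha, ?_⟩
  cases v with
  | some c0 =>
    refine ⟨c0 * oMul Z (emb u a (some c0)), ?_, Or.inl ?_⟩
    · exact (habs _ (abs_oMul habs hg Z) c0).1
    · intro hmem
      apply hnn
      have hid : mulW (emb u a (some c0)) Z (emb u a (some c0)) =
          oMul u (a * (c0 * oMul Z (emb u a (some c0)))) := by
        rw [mulW_eq_left]
        cases u <;> simp [emb, muO, oMul, mul_assoc]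
      rw [hid]
      exact abs_oMul habs1 hmem u
  | none =>
    cases u with
    | some d =>
      refine ⟨muO (emb (some d) a none) Z * d, ?_, Or.inr ?_⟩
      · exact (habs _ (abs_muO habs hg Z) d).2
      · intro hmem
        apply hnn
        have hid : mulW (emb (some d) a none) Z (emb (some d) a none) =
            muO (emb (some d) a none) Z * d * a := by
          rw [mulW_eq_right]
          exact (mul_assoc (muO (emb (some d) a none) Z) d a).symm
        rw [hid]
        exact hmem
    | none =>
      exact absurd hg ha

lemma stem_of_data [Nonempty S] (ps : PrincipalSeries S) {i : ℕ}
    (h1 : 1 ≤ i) (h2 : i ≤ ps.m) {a g : S}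
    (hg : g ∈ ps.C i) (hg1 : g ∉ ps.C (i + 1)) (hocc : occ a g)
    (hnn : ∃ α β z, α ∈ ps.C i ∧ α ∉ ps.C (i + 1) ∧ β ∈ ps.C i ∧ β ∉ ps.C (i + 1) ∧
      mulW α z β ∉ ps.C (i + 1)) :
    a ∈ Stem ps i := by
  have habs1 : ABS (ps.C (i + 1)) := absC ps (i + 1) (by omega) (by omega)
  by_cases haC : a ∈ ps.C i
  · exact Set.mem_union_right _ ⟨haC, fun hmem => hg1 (abs_occ habs1 hmem hocc)⟩
  · obtain ⟨α, β, z, hα, hα1, hβ, hβ1, hmulW⟩ := hnn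
    have hoccgα : occ g α := occ_of_same_level ps h1 h2 hg hg1 hα hα1
    have hoccgβ : occ g β := occ_of_same_level ps h1 h2 hg hg1 hβ hβ1
    obtain ⟨Z, hZocc⟩ := nn_transport (z := z) hoccgα hoccgβ
    have hZnn : mulW g Z g ∉ ps.C (i + 1) := fun hmem => hmulW (abs_occ habs1 hmem hZocc)
    exact Set.mem_union_left _ (fset_of_occ ps h1 h2 haC hg hocc hZnn)

end Development2
section Development3

variable {S : Type*} [Semigroup S]

lemma edge_data [Finite S] [Nonempty S] (hPN : IsPN S) (ps : PrincipalSeries S)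
    {u v : S} (hE : NEdge u v) :
    ∃ i', 1 ≤ i' ∧ i' ≤ ps.m ∧
      ¬ SetMNMod (ps.C (i' + 1)) (ps.C i') ∧
      (∃ g, g ∈ ps.C i' ∧ g ∉ ps.C (i' + 1) ∧ occ u g ∧ occ v g) ∧
      (∃ α β z, α ∈ ps.C i' ∧ α ∉ ps.C (i' + 1) ∧ β ∈ ps.C i' ∧ β ∉ ps.C (i' + 1) ∧
        mulW α z β ∉ ps.C (i' + 1)) := by
  classical
  obtain ⟨huv, hnot⟩ := hE
  simp only [SetMN] at hnot
  push_neg at hnot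
  set N := Nat.card (S × S) with hNdef
  have hN : 0 < N := Nat.card_pos
  obtain ⟨x, hx, y, hy, w, hw, hne⟩ := hnot N hN
  -- pigeonhole to find a cycle
  obtain ⟨t, M, htM, hMN, hcyc⟩ : ∃ t M : ℕ, t < M ∧ M ≤ N ∧
      malcev x y w t = malcev x y w M := by
    letI : Fintype (S × S) := Fintype.ofFinite (S × S)
    have hcard : Fintype.card (S × S) < Fintype.card (Fin (N + 1)) := by
      rw [Fintype.card_fin]
      rw [hNdef, Nat.card_eq_fintype_card]
      omega
    obtain ⟨n₁, n₂, hne12, heq12⟩ :=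
      Fintype.exists_ne_map_eq_of_card_lt
        (fun n : Fin (N + 1) => malcev x y w (n : ℕ)) hcard
    rcases Ne.lt_or_gt hne12 with h | h
    · exact ⟨n₁, n₂, h, Fin.is_le n₂, heq12⟩
    · exact ⟨n₂, n₁, h, Fin.is_le n₁, heq12.symm⟩
  have hMne : ∀ n ≤ M, (malcev x y w n).1 ≠ (malcev x y w n).2 :=
    fun n hn => malcev_ne (malcev_ne hne hMN) hn
  have hM1 : 1 ≤ M := by omega
  -- the level of the cycle
  set i' := lvl ps (malcev x y w M).1 with hi'
  have h1' : 1 ≤ i' := lvl_ge_one ps _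
  have h2' : i' ≤ ps.m := lvl_le ps _
  have hp : (malcev x y w M).1 ∈ ps.C i' := mem_lvl ps _
  have hp1 : (malcev x y w M).1 ∉ ps.C (i' + 1) := notMem_lvl_succ ps _
  have habs : ABS (ps.C i') := absC ps i' h1' (by omega)
  have habs1 : ABS (ps.C (i' + 1)) := absC ps (i' + 1) (by omega) (by omega)
  -- the cycle region lies in level i'
  have hLt : (malcev x y w t).1 = (malcev x y w M).1 := by rw [hcyc]
  have hRt : (malcev x y w t).2 = (malcev x y w M).2 := by rw [hcyc]
  have hin : ∀ n, t ≤ n → n ≤ M →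
      (malcev x y w n).1 ∈ ps.C i' ∧ (malcev x y w n).2 ∈ ps.C i' := by
    intro n hn hnM
    have hq : (malcev x y w M).2 ∈ ps.C i' :=
      (malcev_absorb habs (Or.inl (hLt ▸ hp)) M htM).2
    rcases eq_or_lt_of_le hn with rfl | hlt
    · exact ⟨hLt ▸ hp, hRt ▸ hq⟩
    · exact malcev_absorb habs (Or.inl (hLt ▸ hp)) n hlt
  have hq : (malcev x y w M).2 ∈ ps.C i' := (hin M (by omega) le_rfl).2
  have hq1 : (malcev x y w M).2 ∉ ps.C (i' + 1) := by
    intro hmem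
    have hRtmem : (malcev x y w t).2 ∈ ps.C (i' + 1) := hRt ▸ hmem
    exact hp1 (malcev_absorb habs1 (Or.inr hRtmem) M htM).1
  have hnotin : ∀ n, t ≤ n → n ≤ M →
      (malcev x y w n).1 ∉ ps.C (i' + 1) ∧ (malcev x y w n).2 ∉ ps.C (i' + 1) := by
    intro n hn hnM
    constructor
    · intro hmem
      rcases eq_or_lt_of_le hnM with rfl | hlt
      · exact hp1 hmem
      · exact hp1 (malcev_absorb habs1 (Or.inl hmem) M hlt).1
    · intro hmem
      rcases eq_or_lt_of_le hnM with rfl | hlt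
      · exact hq1 hmem
      · exact hp1 (malcev_absorb habs1 (Or.inr hmem) M hlt).1
  -- membership of the sequence in the generated subsemigroup T
  have hxT : x ∈ Subsemigroup.closure (genSet x y w M) :=
    Subsemigroup.subset_closure (Or.inl (Set.mem_insert x {y}))
  have hyT : y ∈ Subsemigroup.closure (genSet x y w M) :=
    Subsemigroup.subset_closure (Or.inl (Set.mem_insert_of_mem x rfl))
  have hwT : ∀ k, k < M → ∀ c, w k = some c → c ∈ Subsemigroup.closure (genSet x y w M) :=
    fun k hk c hc => Subsemigroup.subset_closure (Or.inr ⟨k, hk, hc⟩)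
  have hpqT := malcev_mem hxT hyT hwT M le_rfl
  -- the cycle hypothesis for pseudo-nilpotency
  have hcycEx : ∃ t', t' < M ∧ (malcev x y w t').1 ≠ (malcev x y w t').2 ∧
      malcev x y w t' = malcev x y w M := ⟨t, htM, hMne t (by omega), hcyc⟩
  -- hPN with the empty ideal
  have hIe : IsIdealIn (Subsemigroup.closure (genSet x y w M) : Set S) (∅ : Set S) :=
    ⟨Set.empty_subset _, fun a ha => absurd ha (Set.notMem_empty a)⟩
  have hmainE := hPN x y w M ∅ hIe (Set.notMem_empty _) (Set.notMem_empty _) hcycEx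
  -- hPN with the ideal C (i'+1) ∩ T
  have hII : IsIdealIn (Subsemigroup.closure (genSet x y w M) : Set S)
      (ps.C (i' + 1) ∩ (Subsemigroup.closure (genSet x y w M) : Set S)) := by
    constructor
    · exact Set.inter_subset_right
    · intro a ha s hs
      exact ⟨⟨(habs1 a ha.1 s).1, mul_mem hs ha.2⟩, ⟨(habs1 a ha.1 s).2, mul_mem ha.2 hs⟩⟩
  have hmainI := hPN x y w M (ps.C (i' + 1) ∩ (Subsemigroup.closure (genSet x y w M) : Set S))
      hII (fun h => hp1 h.1) (fun h => hq1 h.1) hcycEx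
  -- (A) the factor at level i' is not nilpotent
  have hA : ¬ SetMNMod (ps.C (i' + 1)) (ps.C i') := by
    rintro ⟨n, hn, hall⟩
    apply hmainI M le_rfl
    refine ⟨n, hn, ?_⟩
    intro a ha b hb w₁ hw₁
    have hBC : (Subsemigroup.closure ({(malcev x y w M).1, (malcev x y w M).2} : Set S) :
        Set S) ⊆ ps.C i' := by
      intro s hs
      exact closure_pair_le (K := CSub ps i' h1' (by omega)) hp hq hs
    have hBT : (Subsemigroup.closure ({(malcev x y w M).1, (malcev x y w M).2} : Set S) :
        Set S) ⊆ (Subsemigroup.closure (genSet x y w M) : Set S) :=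
      closure_pair_le hpqT.1 hpqT.2
    have hres := hall a (hBC ha) b (hBC hb) w₁ (fun k c hkc => hBC (hw₁ k c hkc))
    rcases hres with hres | ⟨hL, hR⟩
    · exact Or.inl hres
    · right
      have hmem := malcev_mem
        (K := Subsemigroup.closure ({(malcev x y w M).1, (malcev x y w M).2} : Set S))
        ha hb (M := n) (fun k _ c hc => hw₁ k c hc) n le_rfl
      exact ⟨⟨hL, hBT hmem.1⟩, ⟨hR, hBT hmem.2⟩⟩
  -- (B) occurrences of u and v in the cycle element
  have hocc0u : ¬ (x ∈ Subsemigroup.closure ({u} : Set S) ∧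
      y ∈ Subsemigroup.closure ({u} : Set S)) := by
    rintro ⟨h1, h2⟩
    exact hmainE 0 (Nat.zero_le M) (setMNMod_of_pair_in_singleton h1 h2)
  have hocc0v : ¬ (x ∈ Subsemigroup.closure ({v} : Set S) ∧
      y ∈ Subsemigroup.closure ({v} : Set S)) := by
    rintro ⟨h1, h2⟩
    exact hmainE 0 (Nat.zero_le M) (setMNMod_of_pair_in_singleton h1 h2)
  have hxA : x ∈ Subsemigroup.closure ({u, v} : Set S) := hx
  have hyA : y ∈ Subsemigroup.closure ({u, v} : Set S) := hy
  have hvxy : occ v x ∨ occ v y := by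
    rcases mem_closure_pair_cases hxA with h | h
    · rcases mem_closure_pair_cases hyA with h' | h'
      · exact absurd ⟨h, h'⟩ hocc0u
      · exact Or.inr h'
    · exact Or.inl h
  have hxA' : x ∈ Subsemigroup.closure ({v, u} : Set S) := by
    rw [Set.pair_comm v u]; exact hx
  have hyA' : y ∈ Subsemigroup.closure ({v, u} : Set S) := by
    rw [Set.pair_comm v u]; exact hy
  have huxy : occ u x ∨ occ u y := by
    rcases mem_closure_pair_cases hxA' with h | h
    · rcases mem_closure_pair_cases hyA' with h' | h'
      · exact absurd ⟨h, h'⟩ hocc0v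
      · exact Or.inr h'
    · exact Or.inl h
  have hoccs := malcev_occ (x := x) (y := y) (w := w) M hM1
  have hoccu : occ u (malcev x y w M).1 := by
    rcases huxy with h | h
    · exact occ_trans h hoccs.1.1
    · exact occ_trans h hoccs.1.2
  have hoccv : occ v (malcev x y w M).1 := by
    rcases hvxy with h | h
    · exact occ_trans h hoccs.1.1
    · exact occ_trans h hoccs.1.2
  -- (C) non-nullity witness
  refine ⟨i', h1', h2', hA, ⟨(malcev x y w M).1, hp, hp1, hoccu, hoccv⟩,
    ⟨(malcev x y w t).1, (malcev x y w t).2, w t,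
      (hin t le_rfl (by omega)).1, (hnotin t le_rfl (by omega)).1,
      (hin t le_rfl (by omega)).2, (hnotin t le_rfl (by omega)).2, ?_⟩⟩
  have hstep : mulW (malcev x y w t).1 (w t) (malcev x y w t).2 =
      (malcev x y w (t + 1)).1 := (malcev_succ_1 x y w t).symm
  rw [hstep]
  exact (hnotin (t + 1) (by omega) (by omega)).1

end Development3
section Development4

variable {S : Type*} [Semigroup S]

lemma mixed_edge_of_not_root (ps : PrincipalSeries S) {i : ℕ}
    (hroot : ¬ Root ps i) (hA : ¬ SetMNMod (ps.C (i + 1)) (ps.C i)) :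
    ∃ u ∈ ps.C i \ ps.C (i + 1), ∃ v ∈ ps.C (i + 1), NEdge u v := by
  unfold Root at hroot
  push_neg at hroot
  exact hroot hA

lemma rec_lemma [Finite S] [Nonempty S] (hPN : IsPN S) (ps : PrincipalSeries S)
    (a b : S) :
    ∀ fuel i, ps.m ≤ i + fuel → 1 ≤ i → i ≤ ps.m →
      ¬ SetMNMod (ps.C (i + 1)) (ps.C i) →
      (∃ α β z, α ∈ ps.C i ∧ α ∉ ps.C (i + 1) ∧ β ∈ ps.C i ∧ β ∉ ps.C (i + 1) ∧
        mulW α z β ∉ ps.C (i + 1)) →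
      (∃ g, g ∈ ps.C i ∧ g ∉ ps.C (i + 1) ∧ occ a g ∧ occ b g) →
      ∃ j, 1 ≤ j ∧ j ≤ ps.m ∧ Root ps j ∧ a ∈ Stem ps j ∧ b ∈ Stem ps j := by
  intro fuel
  induction fuel with
  | zero =>
    intro i hfi h1 h2 hA hnn hg
    obtain ⟨g, hgC, hg1, ha, hb⟩ := hg
    by_cases hroot : Root ps i
    · exact ⟨i, h1, h2, hroot, stem_of_data ps h1 h2 hgC hg1 ha hnn,
        stem_of_data ps h1 h2 hgC hg1 hb hnn⟩
    · exfalso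
      obtain ⟨u, hu, v, hv, he⟩ := mixed_edge_of_not_root ps hroot hA
      have hi : i = ps.m := by omega
      rw [hi, ps.last] at hv
      exact hv
  | succ fuel ih =>
    intro i hfi h1 h2 hA hnn hg
    obtain ⟨g, hgC, hg1, ha, hb⟩ := hg
    by_cases hroot : Root ps i
    · exact ⟨i, h1, h2, hroot, stem_of_data ps h1 h2 hgC hg1 ha hnn,
        stem_of_data ps h1 h2 hgC hg1 hb hnn⟩
    · obtain ⟨u, hu, v, hv, he⟩ := mixed_edge_of_not_root ps hroot hA
      obtain ⟨i', h1', h2', hA', ⟨g', hg'C, hg'1, hoccu, hoccv⟩, hnn'⟩ :=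
        edge_data hPN ps he
      have hii : i + 1 ≤ i' := by
        by_contra hcon
        have hg'mem : g' ∈ ps.C (i + 1) :=
          abs_occ (absC ps (i + 1) (by omega) (by omega)) hv hoccv
        exact hg'1 (monoC ps (i' + 1) (i + 1) (by omega) (by omega) (by omega) hg'mem)
      have hoccgu : occ g u := occ_of_same_level ps h1 h2 hgC hg1 hu.1 hu.2
      have hocca' : occ a g' := occ_trans (occ_trans ha hoccgu) hoccu
      have hoccb' : occ b g' := occ_trans (occ_trans hb hoccgu) hoccu
      exact ih i' (by omega) h1' h2' hA' hnn' ⟨g', hg'C, hg'1, hocca', hoccb'⟩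

end Development4
/-- If there is an edge in `N_S` between `a` and `b` in a pseudo-nilpotent finite
semigroup, then there is a stem containing both `a` and `b`. -/
theorem stmt16 {S : Type*} [Semigroup S] [Finite S] [Nonempty S]
    (hPN : IsPN S) (ps : PrincipalSeries S) (a b : S) (hE : NEdge a b) :
    ∃ i, 1 ≤ i ∧ i ≤ ps.m ∧ Root ps i ∧ a ∈ Stem ps i ∧ b ∈ Stem ps i := by
  obtain ⟨i₀, h1, h2, hA, ⟨g, hgC, hg1, ha, hb⟩, hnn⟩ := edge_data hPN ps hE
  exact rec_lemma hPN ps a b ps.m i₀ (by omega) h1 h2 hA hnn ⟨g, hgC, hg1, ha, hb⟩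
end
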